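/- arXiv:1607.05166 — 19 statements merged into one kernel-verified Lean document; each statement's English description precedes it below -/
import Mathlib

section
/- If f: S → ℂ satisfies f(xyz₀) + f(xσ(y)z₀) = 2f(x)f(y) for all x,y ∈ S, then f(σ(x)) = f(x) for all x ∈ S. -/
theorem stmt0 {S : Type*} [Semigroup S] (σ : S → S) (hσ : ∀ x y, σ (x * y) = σ x * σ y) (hσσ : ∀ x, σ (σ x) = x)
    (z₀ : S) (hz : ∀ x, z₀ * x = x * z₀) (f : S → ℂ) (hf : ∀ x y, f (x * y * z₀) + f (x * σ y * z₀) = 2 * f x * f y) :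
    ∀ x, f (σ x) = f x := by
  intro x
  by_cases h : ∀ t, f t = 0
  · simp [h]
  · push_neg at h
    obtain ⟨a, ha⟩ := h
    have h1 := hf a x
    have h2 := hf a (σ x)
    rw [hσσ] at h2
    have key : 2 * f a * f (σ x) = 2 * f a * f x := by
      rw [← h1, ← h2]; ring
    have h2a : (2 : ℂ) * f a ≠ 0 := by
      simp [ha]
    exact mul_left_cancel₀ h2a key
end

section
/- If f: S → ℂ satisfies f(xyz₀) + f(xσ(y)z₀) = 2f(x)f(y) for all x,y ∈ S, then f ≠ 0 if and only if f(z₀) ≠ 0. -/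
theorem stmt1 {S : Type*} [Semigroup S] (σ : S → S) (hσ : ∀ x y, σ (x * y) = σ x * σ y) (hσσ : ∀ x, σ (σ x) = x)
    (z₀ : S) (hz : ∀ x, z₀ * x = x * z₀) (f : S → ℂ) (hf : ∀ x y, f (x * y * z₀) + f (x * σ y * z₀) = 2 * f x * f y) :
    f ≠ 0 ↔ f z₀ ≠ 0 := by
  constructor
  · intro hne hz0
    obtain ⟨a, ha⟩ : ∃ x, f x ≠ 0 := by
      by_contra h
      push_neg at h
      exact hne (funext h)
    obtain ⟨u, hu⟩ : ∃ u, f (u * z₀) ≠ 0 := by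
      by_contra h
      push_neg at h
      apply ha
      have h1 := hf a a
      rw [h (a * a), h (a * σ a)] at h1
      have h2 : f a * f a = 0 := by linear_combination -h1 / 2
      exact mul_self_eq_zero.mp h2
    -- key identity
    have key : ∀ x y z, 2 * f x * f y * f z = f (x * z₀) * (f (y * z) + f (y * σ z)) := by
      intro x y z
      have h1 := hf (x * z₀) (y * z)
      have h2 := hf (x * z₀) (y * σ z)
      have h3 := hf x y
      have h4 := hf (x * y * z₀) z
      have h5 := hf (x * σ y * z₀) z
      simp only [hσ, hσσ, mul_assoc, hz] at h1 h2 h3 h4 h5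
      linear_combination (h1 + h2 - h4 - h5) / 2 - f z * h3
    have step : ∀ x y, f u * f (x * z₀) * f y = f (u * z₀) * f x * f y := by
      intro x y
      have h1 := key u (x * z₀) y
      have h3 := hf x y
      simp only [mul_assoc, hz] at h1 h3
      linear_combination h1 / 2 + f (u * z₀) / 2 * h3
    have hE : ∀ w, f u * f (w * z₀) = f (u * z₀) * f w :=
      fun w => mul_right_cancel₀ hu (step w (u * z₀))
    have hfu : f u ≠ 0 := by
      intro h
      apply hu
      have h1 := hE (u * z₀)
      rw [h, zero_mul] at h1
      exact mul_self_eq_zero.mp h1.symm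
    have hB : ∀ x y, f (x * (σ y * (z₀ * z₀))) = 0 := by
      intro x y
      have p2 := hf (x * z₀) y
      have p3 := hf x (y * z₀)
      have p4 := key u (x * σ y * z₀) z₀
      have e1 := hE x
      have e2 := hE y
      simp only [hσ, hσσ, mul_assoc, hz] at p2 p3
      simp only [hσ, hσσ, mul_assoc, hz, hz0, mul_zero] at p4
      have hBC : f u * (f (x * (σ y * (z₀ * z₀))) - f (x * (σ y * (σ z₀ * z₀)))) = 0 := by
        linear_combination f u * p2 - f u * p3 + 2 * f y * e1 - 2 * f x * e2
      have hB2 : f (x * (σ y * (z₀ * z₀))) + f (x * (σ y * (σ z₀ * z₀))) = 0 := by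
        rcases mul_eq_zero.mp p4.symm with h | h
        · exact absurd h hu
        · exact h
      rcases mul_eq_zero.mp hBC with h | h
      · exact absurd h hfu
      · linear_combination (h + hB2) / 2
    have hA : ∀ x y, f (x * (y * (z₀ * z₀))) = 0 := by
      intro x y
      have h := hB x (σ y)
      rwa [hσσ] at h
    have hff : ∀ x y, f (x * z₀) * f y = 0 := by
      intro x y
      have p2 := hf (x * z₀) y
      simp only [hσ, hσσ, mul_assoc, hz] at p2
      rw [hA x y, hB x y] at p2
      linear_combination -p2 / 2
    exact hu (mul_self_eq_zero.mp (hff u (u * z₀)))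
  · intro h h0
    apply h
    rw [h0]
    rfl
end

section
/- If f: S → ℂ satisfies f(xyz₀) + f(xσ(y)z₀) = 2f(x)f(y) for all x,y ∈ S, then f(xσ(z₀)z₀) = f(x)f(z₀) for all x ∈ S. -/
theorem stmt2 {S : Type*} [Semigroup S] (σ : S → S) (hσ : ∀ x y, σ (x * y) = σ x * σ y) (hσσ : ∀ x, σ (σ x) = x)
    (z₀ : S) (hz : ∀ x, z₀ * x = x * z₀) (f : S → ℂ) (hf : ∀ x y, f (x * y * z₀) + f (x * σ y * z₀) = 2 * f x * f y) :
    ∀ x, f (x * σ z₀ * z₀) = f x * f z₀ := by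
  -- σ z₀ is central
  have hσz : ∀ x, σ z₀ * x = x * σ z₀ := by
    intro x
    calc σ z₀ * x = σ z₀ * σ (σ x) := by rw [hσσ]
      _ = σ (z₀ * σ x) := (hσ _ _).symm
      _ = σ (σ x * z₀) := by rw [hz]
      _ = x * σ z₀ := by rw [hσ, hσσ]
  have hc : ∀ a b : S, a * z₀ * b = a * b * z₀ := by
    intro a b; rw [mul_assoc, hz, ← mul_assoc]
  have hσc : ∀ a b : S, a * σ z₀ * b = a * b * σ z₀ := by
    intro a b; rw [mul_assoc, hσz, ← mul_assoc]
  by_cases h0 : ∀ u, f u = 0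
  · intro x; simp [h0]
  · push_neg at h0
    obtain ⟨a, ha⟩ := h0
    have hcan : ∀ c : ℂ, f a * c = 0 → c = 0 := by
      intro c h
      rcases mul_eq_zero.mp h with h | h
      · exact absurd h ha
      · exact h
    have fσ : ∀ y, f (σ y) = f y := by
      intro y
      have h1 := hf a y
      have h2 := hf a (σ y)
      rw [hσσ] at h2
      have h4 : f a * (2 * (f (σ y) - f y)) = 0 := by linear_combination h1 - h2
      have h5 := hcan _ h4
      linear_combination h5 / 2
    -- (E0)
    have hE : ∀ x, f (x * z₀ * z₀) + f (x * σ z₀ * z₀) = 2 * f x * f z₀ := fun x => hf x z₀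
    -- (I)
    have hI : ∀ x, f (x * σ z₀ * z₀ * z₀) = f x * f (σ z₀ * z₀) := by
      intro x
      have h1 := hf x (σ z₀ * z₀)
      rw [hσ, hσσ, hz (σ z₀)] at h1
      rw [← mul_assoc] at h1
      linear_combination h1 / 2
    -- (II)
    have hII : ∀ x, f (x * z₀ * z₀ * z₀) = 2 * f (x * z₀) * f z₀ - f x * f (σ z₀ * z₀) := by
      intro x
      have h1 := hf (x * z₀) z₀
      rw [hc x (σ z₀)] at h1
      linear_combination h1 - hI x
    -- (III)
    have hIII : ∀ x, f (x * σ z₀ * σ z₀ * z₀) = 2 * f (x * σ z₀) * f z₀ - f x * f (σ z₀ * z₀) := by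
      intro x
      have h1 := hf (x * σ z₀) z₀
      linear_combination h1 - hI x
    -- (IV)
    have hIV : ∀ x, f z₀ * (f (x * z₀) + f (x * σ z₀)) = f x * (f (z₀ * z₀) + f (σ z₀ * z₀)) := by
      intro x
      have h1 := hf x (z₀ * z₀)
      rw [hσ] at h1
      rw [← mul_assoc, ← mul_assoc] at h1
      linear_combination (h1 - hII x - hIII x) / 2
    -- (P1)
    have hP1 : ∀ x y, 2 * f z₀ * f (x * y * z₀) - f (σ z₀ * z₀) * f (x * y) + f (σ z₀ * z₀) * f (x * σ y)
        = 2 * f (x * z₀) * f (y * z₀) := by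
      intro x y
      have h1 := hf (x * z₀) (y * z₀)
      rw [hσ] at h1
      rw [show x * z₀ * (y * z₀) = x * y * z₀ * z₀ from by rw [← mul_assoc, hc x y]] at h1
      rw [show x * z₀ * (σ y * σ z₀) = x * σ y * σ z₀ * z₀ from by
        rw [← mul_assoc, hc x (σ y), hc (x * σ y) (σ z₀)]] at h1
      linear_combination h1 - hII (x * y) - hI (x * σ y)
    -- (P2)
    have hP2 : ∀ x y, f (σ z₀ * z₀) * f (x * y) + 2 * f z₀ * f (x * σ y * z₀) - f (σ z₀ * z₀) * f (x * σ y)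
        = 2 * f (x * z₀) * f (y * σ z₀) := by
      intro x y
      have h1 := hf (x * z₀) (y * σ z₀)
      rw [hσ, hσσ] at h1
      rw [show x * z₀ * (y * σ z₀) = x * y * σ z₀ * z₀ from by
        rw [← mul_assoc, hc x y, hc (x * y) (σ z₀)]] at h1
      rw [show x * z₀ * (σ y * z₀) = x * σ y * z₀ * z₀ from by rw [← mul_assoc, hc x (σ y)]] at h1
      linear_combination h1 - hI (x * y) - hII (x * σ y)
    -- (P3)
    have hP3 : ∀ x y, f (σ z₀ * z₀) * f (x * y) + 2 * f z₀ * f (x * σ y * σ z₀) - f (σ z₀ * z₀) * f (x * σ y)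
        = 2 * f (x * σ z₀) * f (y * z₀) := by
      intro x y
      have h1 := hf (x * σ z₀) (y * z₀)
      rw [hσ] at h1
      rw [show x * σ z₀ * (y * z₀) = x * y * σ z₀ * z₀ from by rw [← mul_assoc, hσc x y]] at h1
      rw [show x * σ z₀ * (σ y * σ z₀) = x * σ y * σ z₀ * σ z₀ from by
        rw [← mul_assoc, hσc x (σ y)]] at h1
      linear_combination h1 - hI (x * y) - hIII (x * σ y)
    -- (P4)
    have hP4 : ∀ x y, 2 * f z₀ * f (x * y * σ z₀) - f (σ z₀ * z₀) * f (x * y) + f (σ z₀ * z₀) * f (x * σ y)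
        = 2 * f (x * σ z₀) * f (y * σ z₀) := by
      intro x y
      have h1 := hf (x * σ z₀) (y * σ z₀)
      rw [hσ, hσσ] at h1
      rw [show x * σ z₀ * (y * σ z₀) = x * y * σ z₀ * σ z₀ from by rw [← mul_assoc, hσc x y]] at h1
      rw [show x * σ z₀ * (σ y * z₀) = x * σ y * σ z₀ * z₀ from by
        rw [← mul_assoc, hσc x (σ y)]] at h1
      linear_combination h1 - hIII (x * y) - hI (x * σ y)
    -- (G2)
    have hG2 : ∀ x y, f (x * y * z₀ * z₀) + f (x * σ y * z₀ * z₀) = 2 * f (x * z₀) * f y := by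
      intro x y
      have h1 := hf (x * z₀) y
      rw [hc x y, hc x (σ y)] at h1
      exact h1
    -- ψ-sum
    have hψsum : ∀ x y, f (x * y * σ z₀) + f (x * σ y * σ z₀) = 2 * f x * f y := by
      intro x y
      have h1 := hf (σ x) (σ y)
      rw [hσσ, fσ, fσ] at h1
      have e1 : f (x * y * σ z₀) = f (σ x * σ y * z₀) := by
        rw [← fσ (x * y * σ z₀), hσ, hσ, hσσ]
      have e2 : f (x * σ y * σ z₀) = f (σ x * y * z₀) := by
        rw [← fσ (x * σ y * σ z₀), hσ, hσ, hσσ, hσσ]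
      rw [e1, e2]
      exact h1
    -- (V)
    have hV : ∀ x, 2 * f z₀ * f z₀ * f x = (f (z₀ * z₀) + f (σ z₀ * z₀)) * f (x * z₀) := by
      intro x
      have hq : f a * (2 * f z₀ * f z₀ * f x - (f (z₀ * z₀) + f (σ z₀ * z₀)) * f (x * z₀)) = 0 := by
        linear_combination (f z₀ * hP1 x a + f z₀ * hP2 x a - 2 * f z₀ * f z₀ * hf x a
          + 2 * f (x * z₀) * hIV a) / 2
      have h5 := hcan _ hq
      linear_combination h5
    -- (Vψ)
    have hVψ : ∀ x, 2 * f z₀ * f z₀ * f x = (f (z₀ * z₀) + f (σ z₀ * z₀)) * f (x * σ z₀) := by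
      intro x
      have hq : f a * (2 * f z₀ * f z₀ * f x - (f (z₀ * z₀) + f (σ z₀ * z₀)) * f (x * σ z₀)) = 0 := by
        linear_combination (f z₀ * hP3 x a + f z₀ * hP4 x a - 2 * f z₀ * f z₀ * hψsum x a
          + 2 * f (x * σ z₀) * hIV a) / 2
      have h5 := hcan _ hq
      linear_combination h5
    intro x
    by_cases hK : f (z₀ * z₀) + f (σ z₀ * z₀) = 0
    · -- K = 0 case: first f z₀ = 0
      have hk : f z₀ = 0 := by
        have h1 := hV a
        rw [hK, zero_mul] at h1
        have h2 : f a * (2 * (f z₀ * f z₀)) = 0 := by linear_combination h1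
        have h3 := hcan _ h2
        have h4 : f z₀ * f z₀ = 0 := by linear_combination h3 / 2
        rcases mul_eq_zero.mp h4 with h | h <;> exact h
      by_cases hφ0 : ∀ u, f (u * z₀) = 0
      · linear_combination hE x - hφ0 (x * z₀) + f x * hk
      · push_neg at hφ0
        obtain ⟨b, hb⟩ := hφ0
        exfalso
        have hψφ : ∀ y, f (y * σ z₀) = - f (y * z₀) := by
          intro y
          have h1 := hP1 b y
          have h2 := hP2 b y
          have h3 : f (b * z₀) * (f (y * σ z₀) + f (y * z₀)) = 0 := by
            linear_combination (f (b * y * z₀) + f (b * σ y * z₀)) * hk - (h1 + h2) / 2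
          rcases mul_eq_zero.mp h3 with h | h
          · exact absurd h hb
          · linear_combination h
        have hd : f (σ z₀ * z₀) = 0 := by
          by_contra hdne
          have hAA : ∀ u v : S, f (u * z₀ * z₀) * f (v * z₀ * z₀)
              = - f (σ z₀ * z₀) * f (u * z₀) * f v := by
            intro u v
            have h1 := hP1 (u * z₀) (v * z₀)
            rw [hσ] at h1
            rw [show u * z₀ * (v * z₀) = u * v * z₀ * z₀ from by rw [← mul_assoc, hc u v]] at h1
            rw [show u * z₀ * (σ v * σ z₀) = u * σ v * σ z₀ * z₀ from by
              rw [← mul_assoc, hc u (σ v), hc (u * σ v) (σ z₀)]] at h1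
            have h2 : f (u * σ v * σ z₀ * z₀) = - f (u * σ v * z₀ * z₀) := by
              have h := hψφ (u * σ v * z₀)
              rw [hc (u * σ v) (σ z₀)] at h
              exact h
            linear_combination (-1/2 : ℂ) * h1 + (f (σ z₀ * z₀) / 2) * h2
              - (f (σ z₀ * z₀) / 2) * hG2 u v + f (u * v * z₀ * z₀ * z₀) * hk
          have h5 := hAA z₀ a
          have h6 := hAA a z₀
          have h7 : f (σ z₀ * z₀) * (f (z₀ * z₀) * f a) = 0 := by
            linear_combination h5 - h6 + f (σ z₀ * z₀) * f (a * z₀) * hk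
          rcases mul_eq_zero.mp h7 with h | h
          · exact hdne h
          · rcases mul_eq_zero.mp h with h | h
            · exact hdne (by linear_combination hK - h)
            · exact ha h
        have h1 := hP1 b b
        have h2 : f (b * z₀) * f (b * z₀) = 0 := by
          linear_combination (-1/2 : ℂ) * h1 + f (b * b * z₀) * hk
            + ((f (b * σ b) - f (b * b)) / 2) * hd
        exact hb (by rcases mul_eq_zero.mp h2 with h | h <;> exact h)
    · -- K ≠ 0 case
      have h1 := hV (x * z₀)
      have h2 := hVψ (x * z₀)
      have h3 : (f (z₀ * z₀) + f (σ z₀ * z₀)) * (f (x * z₀ * z₀) - f (x * z₀ * σ z₀)) = 0 := by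
        linear_combination h2 - h1
      rcases mul_eq_zero.mp h3 with h | h
      · exact absurd h hK
      · rw [hc x (σ z₀)] at h
        linear_combination (hE x - h) / 2
end

section
/- If f: S → ℂ satisfies f(xyz₀) + f(xσ(y)z₀) = 2f(x)f(y) for all x,y ∈ S, then f(xz₀z₀) = f(x)f(z₀) for all x ∈ S. -/
theorem stmt3 {S : Type*} [Semigroup S] (σ : S → S) (hσ : ∀ x y, σ (x * y) = σ x * σ y) (hσσ : ∀ x, σ (σ x) = x)
    (z₀ : S) (hz : ∀ x, z₀ * x = x * z₀) (f : S → ℂ) (hf : ∀ x y, f (x * y * z₀) + f (x * σ y * z₀) = 2 * f x * f y) :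
    ∀ x, f (x * z₀ * z₀) = f x * f z₀ := by
  -- σ z₀ is central
  have hz' : ∀ a : S, σ z₀ * a = a * σ z₀ := by
    intro a
    calc σ z₀ * a = σ (z₀ * σ a) := by rw [hσ, hσσ]
      _ = σ (σ a * z₀) := by rw [hz]
      _ = a * σ z₀ := by rw [hσ, hσσ]
  -- move z₀ to the right
  have hc : ∀ a b : S, a * z₀ * b = a * b * z₀ := by
    intro a b
    calc a * z₀ * b = a * (z₀ * b) := mul_assoc a z₀ b
      _ = a * (b * z₀) := by rw [hz]
      _ = a * b * z₀ := (mul_assoc a b z₀).symm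
  have hc' : ∀ a b : S, a * σ z₀ * b = a * b * σ z₀ := by
    intro a b
    calc a * σ z₀ * b = a * (σ z₀ * b) := mul_assoc a (σ z₀) b
      _ = a * (b * σ z₀) := by rw [hz']
      _ = a * b * σ z₀ := (mul_assoc a b (σ z₀)).symm
  -- Lemma L : f (a * σ z₀ * z₀) = f (σ a * z₀ * z₀)
  have L : ∀ a : S, f (a * σ z₀ * z₀) = f (σ a * z₀ * z₀) := by
    intro a
    have h1 := hf a z₀
    have h2 := hf z₀ a
    rw [hz a, hz (σ a)] at h2
    linear_combination h1 - h2
  -- Lemma A : f (a*z₀*z₀) + f (σ a*z₀*z₀) = 2 * f a * f z₀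
  have A : ∀ a : S, f (a * z₀ * z₀) + f (σ a * z₀ * z₀) = 2 * f a * f z₀ := by
    intro a
    have h1 := hf a z₀
    rw [L a] at h1
    exact h1
  -- Lemma N : f (a*σz₀*σz₀*z₀) = f (σ a*z₀*z₀*z₀)
  have N : ∀ a : S, f (a * σ z₀ * σ z₀ * z₀) = f (σ a * z₀ * z₀ * z₀) := by
    intro a
    have h1 := hf a (z₀ * z₀)
    simp only [hσ, ← mul_assoc] at h1
    have h2 := hf (z₀ * z₀) a
    have e1 : z₀ * z₀ * a * z₀ = a * z₀ * z₀ * z₀ := by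
      rw [hc z₀ a, hz a]
    have e2 : z₀ * z₀ * σ a * z₀ = σ a * z₀ * z₀ * z₀ := by
      rw [hc z₀ (σ a), hz (σ a)]
    rw [e1, e2] at h2
    linear_combination h1 - h2
  intro x
  by_cases h0 : ∃ u, f u ≠ 0
  · obtain ⟨w, hw⟩ := h0
    have hxy := hf x w
    have A1 := A (x * w * z₀)
    simp only [hσ, hσσ, ← mul_assoc] at A1
    have A2 := A (x * σ w * z₀)
    simp only [hσ, hσσ, ← mul_assoc] at A2
    have Aw := A w
    have h5 := hf x (w * z₀ * z₀)
    simp only [hσ, hσσ, ← mul_assoc] at h5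
    have h6 := hf x (σ w * z₀ * z₀)
    simp only [hσ, hσσ, ← mul_assoc] at h6
    have N1 := N (x * σ w)
    simp only [hσ, hσσ, ← mul_assoc] at N1
    have N2 := N (x * w)
    simp only [hσ, hσσ, ← mul_assoc] at N2
    have h7 := hf (σ x * z₀ * z₀) w
    rw [hc (σ x * z₀) w, hc (σ x) w, hc (σ x * z₀) (σ w), hc (σ x) (σ w)] at h7
    have h8 := hf (σ x * σ z₀ * z₀) w
    rw [hc (σ x * σ z₀) w, hc' (σ x) w, hc (σ x * σ z₀) (σ w), hc' (σ x) (σ w)] at h8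
    have hcancel : f (σ x * z₀ * z₀) * f w = f (σ x * σ z₀ * z₀) * f w := by
      linear_combination (-1/2 : ℂ) * h7 + (1/2 : ℂ) * h8 - (1/2 : ℂ) * N1 - (1/2 : ℂ) * N2
        + (1/2 : ℂ) * h5 + (1/2 : ℂ) * h6 - (1/2 : ℂ) * A1 - (1/2 : ℂ) * A2
        + (f x) * Aw - (f z₀) * hxy
    have hkey : f (σ x * z₀ * z₀) = f (σ x * σ z₀ * z₀) :=
      mul_right_cancel₀ hw hcancel
    have Lx := L x
    have Lsx := L (σ x)
    rw [hσσ] at Lsx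
    have hfx := hf x z₀
    -- f(x*σz₀*z₀) = f(σx*z₀*z₀) = f(σx*σz₀*z₀) = f(x*z₀*z₀)
    have : f (x * σ z₀ * z₀) = f (x * z₀ * z₀) := by
      rw [Lx, hkey, Lsx]
    linear_combination (hfx - this) / 2
  · push_neg at h0
    simp [h0]
end

section
/- Let f: S → ℂ be a nonzero solution of f(xyz₀) + f(xσ(y)z₀) = 2f(x)f(y). Define g(x) = f(xz₀)/f(z₀). Then g satisfies d'Alembert's equation g(xy) + g(xσ(y)) = 2g(x)g(y) for all x,y ∈ S, g(z₀) ≠ 0, and g(xz₀) = g(x)g(z₀) for all x ∈ S. -/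
theorem stmt4 {S : Type*} [Semigroup S] (σ : S → S) (hσ : ∀ x y, σ (x * y) = σ x * σ y) (hσσ : ∀ x, σ (σ x) = x)
    (z₀ : S) (hz : ∀ x, z₀ * x = x * z₀) (f : S → ℂ) (hf0 : f ≠ 0) (hf : ∀ x y, f (x * y * z₀) + f (x * σ y * z₀) = 2 * f x * f y)
    (g : S → ℂ) (hg : ∀ x, g x = f (x * z₀) / f z₀) :
    (∀ x y, g (x * y) + g (x * σ y) = 2 * g x * g y) ∧ g z₀ ≠ 0 ∧
      ∀ x, g (x * z₀) = g x * g z₀ := by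
  obtain ⟨a, ha⟩ := Function.ne_iff.mp hf0
  simp only [Pi.zero_apply] at ha
  have hz1 : ∀ u v : S, u * z₀ * v = u * v * z₀ := fun u v => by
    rw [mul_assoc, hz, ← mul_assoc]
  have hcx : ∀ x : S, σ z₀ * x = x * σ z₀ := by
    intro x
    calc σ z₀ * x = σ z₀ * σ (σ x) := by rw [hσσ]
    _ = σ (z₀ * σ x) := (hσ _ _).symm
    _ = σ (σ x * z₀) := by rw [hz]
    _ = σ (σ x) * σ z₀ := hσ _ _
    _ = x * σ z₀ := by rw [hσσ]
  have hc1 : ∀ u v : S, u * σ z₀ * v = u * v * σ z₀ := fun u v => by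
    rw [mul_assoc, hcx, ← mul_assoc]
  have feq : ∀ s, f (σ s) = f s := by
    intro s
    have h1 := hf a s
    have h2 := hf a (σ s)
    rw [hσσ] at h2
    have h3 : (2 * f a) * f (σ s) = (2 * f a) * f s := by linear_combination h1 - h2
    exact mul_left_cancel₀ (mul_ne_zero two_ne_zero ha) h3
  -- Key identity (F)
  have hF : ∀ x y, f (x * z₀) * (f (y * z₀) + f (σ y * z₀)) = 2 * f z₀ * f x * f y := by
    intro x y
    have hD := hf (x * z₀) (y * z₀)
    have hD' := hf (x * z₀) (σ y * z₀)
    have hE1 := hf (x * y * z₀) z₀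
    have hE2 := hf (x * σ y * z₀) z₀
    have hxy := hf x y
    rw [hσ] at hD
    rw [hσ, hσσ] at hD'
    rw [show x * z₀ * (y * z₀) * z₀ = x * y * z₀ * z₀ * z₀ from by rw [← mul_assoc, hz1 x y],
        show x * z₀ * (σ y * σ z₀) * z₀ = x * σ y * z₀ * z₀ * σ z₀ from by
          rw [← mul_assoc, hz1 x (σ y), hc1]] at hD
    rw [show x * z₀ * (σ y * z₀) * z₀ = x * σ y * z₀ * z₀ * z₀ from by
          rw [← mul_assoc, hz1 x (σ y)],
        show x * z₀ * (y * σ z₀) * z₀ = x * y * z₀ * z₀ * σ z₀ from by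
          rw [← mul_assoc, hz1 x y, hc1]] at hD'
    rw [hc1] at hE1
    rw [hc1] at hE2
    linear_combination (hE1 + hE2 - hD - hD') / 2 + f z₀ * hxy
  -- f z₀ ≠ 0
  have hc0 : f z₀ ≠ 0 := by
    intro h0
    have hbex : ∃ b, f (b * z₀) ≠ 0 := by
      by_contra hall
      push_neg at hall
      have h := hf a a
      rw [hall, hall] at h
      exact ha (by
        have : f a * f a = 0 := by linear_combination -h / 2
        rcases mul_eq_zero.mp this with h' | h' <;> exact h')
    obtain ⟨b, hb⟩ := hbex
    have hB : ∀ y, f (σ y * z₀) = - f (y * z₀) := by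
      intro y
      have h := hF b y
      have h2 : f (b * z₀) * (f (y * z₀) + f (σ y * z₀)) = 0 := by
        rw [h, h0]; ring
      rcases mul_eq_zero.mp h2 with h' | h'
      · exact absurd h' hb
      · linear_combination h'
    have hσz : ∀ u, f (u * σ z₀) = - f (u * z₀) := by
      intro u
      have h1 : f (u * σ z₀) = f (σ u * z₀) := by
        rw [← feq (u * σ z₀), hσ, hσσ]
      rw [h1, hB]
    have hP : ∀ x y, f (x * y * z₀ * z₀) = f (x * z₀) * f y + f x * f (y * z₀) := by
      intro x y
      have hA := hf (x * z₀) y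
      rw [show x * z₀ * y * z₀ = x * y * z₀ * z₀ from by rw [hz1 x y],
          show x * z₀ * σ y * z₀ = x * σ y * z₀ * z₀ from by rw [hz1 x (σ y)]] at hA
      have hG := hf x (y * z₀)
      rw [hσ] at hG
      rw [show x * (y * z₀) * z₀ = x * y * z₀ * z₀ from by rw [← mul_assoc],
          show x * (σ y * σ z₀) * z₀ = x * σ y * z₀ * σ z₀ from by
            rw [← mul_assoc, hc1]] at hG
      rw [hσz (x * σ y * z₀)] at hG
      linear_combination (hA + hG) / 2
    have hH : ∀ x y, f (x * z₀ * z₀) * f y = f x * f (y * z₀ * z₀) := by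
      intro x y
      have h1 := hP (x * z₀) y
      rw [show x * z₀ * y = x * y * z₀ from hz1 x y] at h1
      have h2 := hP x (y * z₀)
      rw [show x * (y * z₀) = x * y * z₀ from (mul_assoc x y z₀).symm] at h2
      linear_combination h2 - h1
    have hI : ∀ y, f (a * z₀ * z₀) * f (y * z₀) = f a * (f (z₀ * z₀) * f y) := by
      intro y
      have h1 := hP z₀ y
      rw [show z₀ * y = y * z₀ from hz y] at h1
      have h2 := hH a (y * z₀)
      linear_combination h2 + f a * h1 + f a * f (y * z₀) * h0
    have hz2 : f (a * z₀ * z₀) * f (z₀ * z₀) = 0 := by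
      have h := hI z₀
      linear_combination h + f a * f (z₀ * z₀) * h0
    have hl : f (a * z₀ * z₀) = 0 := by
      rcases mul_eq_zero.mp hz2 with h | hq
      · exact h
      · have h := hI b
        rw [hq] at h
        have h' : f (a * z₀ * z₀) * f (b * z₀) = 0 := by linear_combination h
        rcases mul_eq_zero.mp h' with h'' | h''
        · exact h''
        · exact absurd h'' hb
    have hyz : ∀ y, f (y * z₀ * z₀) = 0 := by
      intro y
      have h := hH a y
      rw [hl] at h
      have h' : f a * f (y * z₀ * z₀) = 0 := by linear_combination -h
      rcases mul_eq_zero.mp h' with h'' | h''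
      · exact absurd h'' ha
      · exact h''
    have key : ∀ x y, f (x * z₀) * f y + f x * f (y * z₀) = 0 := by
      intro x y
      have h := hP x y
      linear_combination hyz (x * y) - h
    have hb0 : f b = 0 := by
      have h : f b * (2 * f (b * z₀)) = 0 := by linear_combination key b b
      rcases mul_eq_zero.mp h with h' | h'
      · exact h'
      · exact absurd (by linear_combination h' / 2) hb
    have h := key b a
    rw [hb0] at h
    have h' : f (b * z₀) * f a = 0 := by linear_combination h
    rcases mul_eq_zero.mp h' with h'' | h''
    · exact hb h''
    · exact ha h''
  -- main part
  have hB0 : f (z₀ * z₀) + f (σ z₀ * z₀) ≠ 0 := by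
    intro h
    have h2 := hF a z₀
    rw [h, mul_zero] at h2
    have h3 : 2 * f z₀ * f a * f z₀ = 0 := h2.symm
    rcases mul_eq_zero.mp h3 with h4 | h4
    · rcases mul_eq_zero.mp h4 with h5 | h5
      · rcases mul_eq_zero.mp h5 with h6 | h6
        · norm_num at h6
        · exact hc0 h6
      · exact ha h5
    · exact hc0 h4
  obtain ⟨k, hk⟩ : ∃ k : ℂ, ∀ x, f (x * z₀) = k * f x := by
    refine ⟨2 * f z₀ * f z₀ / (f (z₀ * z₀) + f (σ z₀ * z₀)), fun x => ?_⟩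
    rw [div_mul_eq_mul_div, eq_div_iff hB0]
    linear_combination hF x z₀
  have hk2 : k * k = f z₀ := by
    have h := hF a a
    rw [hk a, hk (σ a), feq a] at h
    have h2 : (k * k) * (2 * (f a * f a)) = f z₀ * (2 * (f a * f a)) := by
      linear_combination h
    exact mul_right_cancel₀ (mul_ne_zero two_ne_zero (mul_ne_zero ha ha)) h2
  have hk0 : k ≠ 0 := by
    intro h
    apply hc0
    rw [← hk2, h, mul_zero]
  refine ⟨fun x y => ?_, ?_, fun x => ?_⟩
  · rw [hg, hg, hg, hg, hk x, hk y]
    have hxy := hf x y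
    field_simp
    linear_combination f z₀ * hxy - 2 * f x * f y * hk2
  · rw [hg, hk z₀]
    exact div_ne_zero (mul_ne_zero hk0 hc0) hc0
  · rw [hg, hg, hg, hk (x * z₀), hk x, hk z₀]
    field_simp
end

section
/- Any nonzero solution f: S → ℂ of the Kannappan equation f(xyz₀) + f(xσ(y)z₀) = 2f(x)f(y) has the form f = g(z₀)·g, where g satisfies d'Alembert's equation g(xy) + g(xσ(y)) = 2g(x)g(y), g(z₀) ≠ 0, and g(xz₀) = g(z₀)g(x) for all x; explicitly g(x) = f(xz₀)/f(z₀). -/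
theorem stmt6 {S : Type*} [Semigroup S] (σ : S → S) (hσ : (∀ x y, σ (x * y) = σ x * σ y) ∨ (∀ x y, σ (x * y) = σ y * σ x))
    (hσσ : ∀ x, σ (σ x) = x)
    (z₀ : S) (hz : ∀ x, z₀ * x = x * z₀) (f : S → ℂ) (hf0 : f ≠ 0) (hf : ∀ x y, f (x * y * z₀) + f (x * σ y * z₀) = 2 * f x * f y) :
    ∃ g : S → ℂ, (∀ x y, g (x * y) + g (x * σ y) = 2 * g x * g y) ∧
      g z₀ ≠ 0 ∧ (∀ x, g (x * z₀) = g z₀ * g x) ∧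
      (∀ x, f x = g z₀ * g x) ∧ (∀ x, g x = f (x * z₀) / f z₀) := by
  classical
  obtain ⟨x₀, hx₀⟩ := Function.ne_iff.mp hf0
  have hx₀ : f x₀ ≠ 0 := hx₀
  have h2x₀ : (2 : ℂ) * f x₀ ≠ 0 := by
    simp [hx₀]
  -- σ z₀ is central
  have hw : ∀ x, σ z₀ * x = x * σ z₀ := by
    intro x
    rcases hσ with h | h
    · have := congrArg σ (hz (σ x))
      rwa [h, h, hσσ] at this
    · have := congrArg σ (hz (σ x))
      rw [h, h, hσσ] at this
      exact this.symm
  have hz' : ∀ a b, a * z₀ * b = a * b * z₀ := by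
    intro a b; rw [mul_assoc, hz, ← mul_assoc]
  have hw' : ∀ a b, a * σ z₀ * b = a * b * σ z₀ := by
    intro a b; rw [mul_assoc, hw, ← mul_assoc]
  have hσc : ∀ a, σ (a * z₀) = σ a * σ z₀ := by
    intro a; rcases hσ with h | h
    · rw [h]
    · rw [h, hw]
  have hσcw : ∀ a, σ (a * σ z₀) = σ a * z₀ := by
    intro a; rcases hσ with h | h
    · rw [h, hσσ]
    · rw [h, hσσ, hz]
  -- f is σ-even
  have hfσ : ∀ y, f (σ y) = f y := by
    intro y
    have h1 := hf x₀ y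
    have h2 := hf x₀ (σ y)
    rw [hσσ] at h2
    have h3 : 2 * f x₀ * f (σ y) = 2 * f x₀ * f y := by
      rw [← h1, ← h2]; ring
    exact mul_left_cancel₀ h2x₀ h3
  -- key cancellation lemma: f(u z₀ z₀) = f(u z₀ σz₀)
  have hZ : ∀ u, f (u * z₀ * z₀) = f (u * z₀ * σ z₀) := by
    rcases hσ with h | h
    · -- automorphism case
      have hEw : ∀ x y, f (x * y * σ z₀) + f (x * σ y * σ z₀) = 2 * f x * f y := by
        intro x y
        have h1 := hf (σ x) (σ y)
        rw [hσσ, hfσ, hfσ] at h1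
        have e1 : σ (x * y * σ z₀) = σ x * σ y * z₀ := by rw [h, h, hσσ]
        have e2 : σ (x * σ y * σ z₀) = σ x * y * z₀ := by rw [h, h, hσσ, hσσ]
        rw [← e1, ← e2, hfσ, hfσ] at h1
        exact h1
      have hP : ∀ x, f (x * z₀) = f (x * σ z₀) := by
        intro x
        have h1 := hEw (x * z₀) x₀
        have h2 := hf (x * σ z₀) x₀
        have e1 : x * z₀ * x₀ * σ z₀ = x * x₀ * z₀ * σ z₀ := by rw [hz']
        have e2 : x * z₀ * σ x₀ * σ z₀ = x * σ x₀ * z₀ * σ z₀ := by rw [hz']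
        have e3 : x * σ z₀ * x₀ * z₀ = x * x₀ * z₀ * σ z₀ := by rw [hw', hw']
        have e4 : x * σ z₀ * σ x₀ * z₀ = x * σ x₀ * z₀ * σ z₀ := by rw [hw', hw']
        rw [e1, e2] at h1
        rw [e3, e4] at h2
        have h5 : 2 * f (x * z₀) * f x₀ = 2 * f (x * σ z₀) * f x₀ := by
          rw [← h1, ← h2]
        have h6 := mul_right_cancel₀ hx₀ h5
        exact mul_left_cancel₀ (two_ne_zero) h6
      intro u
      exact hP (u * z₀)
    · -- anti-automorphism case
      have hL : ∀ x y, f (y * x * σ z₀) + f (σ y * x * σ z₀) = 2 * f x * f y := by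
        intro x y
        have h1 := hf (σ x) (σ y)
        rw [hσσ, hfσ, hfσ] at h1
        have e1 : σ (y * x * σ z₀) = σ x * σ y * z₀ := by rw [h, h, hσσ, hz]
        have e2 : σ (σ y * x * σ z₀) = σ x * y * z₀ := by rw [h, h, hσσ, hσσ, hz]
        rw [← e1, ← e2, hfσ, hfσ] at h1
        exact h1
      have hc : ∀ y, f (σ y * z₀ * σ z₀) = f (y * z₀ * σ z₀) := by
        intro y
        have e : σ (y * z₀ * σ z₀) = σ y * z₀ * σ z₀ := by
          rw [h, h, hσσ, hz, hw, hw']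
        rw [← e, hfσ]
      have hfzw : ∀ y, f (y * z₀ * σ z₀) = f z₀ * f y := by
        intro y
        have h1 := hL z₀ y
        rw [hc] at h1
        linear_combination h1 / 2
      intro u
      have h1 := hf u z₀
      have e : u * σ z₀ * z₀ = u * z₀ * σ z₀ := hw' u z₀
      rw [e, hfzw] at h1
      rw [hfzw]
      linear_combination h1
  -- Key: f(x z₀) f(y) = f(x) f(y z₀)
  have hKey : ∀ x y, f (x * z₀) * f y = f x * f (y * z₀) := by
    intro x y
    have h1 := hf (x * z₀) y
    have e1 : x * z₀ * y * z₀ = x * y * z₀ * z₀ := by rw [hz']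
    have e2 : x * z₀ * σ y * z₀ = x * σ y * z₀ * z₀ := by rw [hz']
    rw [e1, e2] at h1
    have h2 := hf x (y * z₀)
    have e3 : x * (y * z₀) * z₀ = x * y * z₀ * z₀ := by rw [← mul_assoc]
    have e4 : x * σ (y * z₀) * z₀ = x * σ y * z₀ * σ z₀ := by
      rw [hσc, ← mul_assoc, hw']
    rw [e3, e4, ← hZ (x * σ y)] at h2
    have h5 : 2 * f (x * z₀) * f y = 2 * f x * f (y * z₀) := by
      rw [← h1, ← h2]
    linear_combination h5 / 2
  obtain ⟨k, hk⟩ : ∃ k : ℂ, ∀ x, f (x * z₀) = k * f x := by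
    refine ⟨f (x₀ * z₀) / f x₀, fun x => ?_⟩
    rw [div_mul_eq_mul_div, eq_div_iff hx₀]
    linear_combination hKey x x₀
  have hk0 : k ≠ 0 := by
    intro h0
    have h1 := hf x₀ x₀
    rw [hk (x₀ * x₀), hk (x₀ * σ x₀), h0] at h1
    have h2 : f x₀ * f x₀ = 0 := by linear_combination -h1 / 2
    exact hx₀ (mul_self_eq_zero.mp h2)
  have hfw2 : ∀ x, f (x * σ z₀) = k * f x := by
    intro x
    rw [← hfσ (x * σ z₀), hσcw, hk, hfσ]
  have hfz : f z₀ = k * k := by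
    have h1 := hf x₀ z₀
    rw [hk (x₀ * z₀), hk (x₀ * σ z₀), hk x₀, hfw2 x₀] at h1
    have h2 : 2 * f x₀ * f z₀ = 2 * f x₀ * (k * k) := by linear_combination -h1
    exact mul_left_cancel₀ h2x₀ h2
  refine ⟨fun x => f x / k, fun x y => ?_, ?_, fun x => ?_, fun x => ?_, fun x => ?_⟩
  · show f (x * y) / k + f (x * σ y) / k = 2 * (f x / k) * (f y / k)
    have h1 := hf x y
    rw [hk (x * y), hk (x * σ y)] at h1
    field_simp
    linear_combination h1
  · show f z₀ / k ≠ 0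
    rw [hfz, mul_div_assoc, div_self hk0, mul_one]
    exact hk0
  · show f (x * z₀) / k = f z₀ / k * (f x / k)
    rw [hk x, hfz]
    field_simp
  · show f x = f z₀ / k * (f x / k)
    rw [hfz]
    field_simp
  · show f x / k = f (x * z₀) / f z₀
    rw [hk x, hfz]
    field_simp
end

section
/- Any nonzero solution f: S → ℂ of f(xyz₀) = f(x)f(y) for all x,y ∈ S has the form f = χ(z₀)·χ, where χ: S → ℂ is a multiplicative function with χ(z₀) ≠ 0. -/
theorem stmt7 {S : Type*} [Semigroup S] (z₀ : S) (hz : ∀ x, z₀ * x = x * z₀)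
    (f : S → ℂ) (hf0 : f ≠ 0)
    (hf : ∀ x y, f (x * y * z₀) = f x * f y) :
    ∃ χ : S → ℂ, (∀ x y, χ (x * y) = χ x * χ y) ∧ χ z₀ ≠ 0 ∧
      ∀ x, f x = χ z₀ * χ x := by
  obtain ⟨x₀, hx₀⟩ := Function.ne_iff.mp hf0
  simp only [Pi.zero_apply] at hx₀
  set k : ℂ := f (x₀ * z₀) / f x₀ with hk
  clear_value k
  have key : ∀ y, f (y * z₀) = k * f y := by
    intro y
    have h1 : f (x₀ * (y * z₀) * z₀) = f x₀ * f (y * z₀) := hf x₀ (y * z₀)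
    have h2 : f ((x₀ * z₀) * y * z₀) = f (x₀ * z₀) * f y := hf (x₀ * z₀) y
    have he : x₀ * (y * z₀) = (x₀ * z₀) * y := by
      rw [← hz y, mul_assoc]
    rw [he, h2] at h1
    rw [hk, div_mul_eq_mul_div, eq_div_iff hx₀]
    linear_combination -h1
  have hkne : k ≠ 0 := by
    intro h
    apply hx₀
    have := hf x₀ x₀
    rw [key (x₀ * x₀), h, zero_mul] at this
    exact pow_eq_zero_iff (n := 2) (by norm_num) |>.mp (by rw [sq]; exact this.symm)
  have hz2 : f z₀ = k ^ 2 := by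
    have h1 := hf x₀ z₀
    rw [key (x₀ * z₀), key x₀] at h1
    exact mul_left_cancel₀ hx₀ (by linear_combination -h1 : f x₀ * f z₀ = f x₀ * k ^ 2)
  refine ⟨fun x => f x / k, ?_, ?_, ?_⟩
  · intro x y
    have h1 := hf x y
    rw [key (x * y)] at h1
    field_simp
    linear_combination h1
  · simp only [hz2]
    field_simp
    exact hkne
  · intro x
    simp only [hz2]
    field_simp
end

section
/- If f: S → ℂ is a nonzero solution of the Van Vleck equation f(xσ(y)z₀) − f(xyz₀) = 2f(x)f(y) for all x,y ∈ S, then f(σ(x)) = −f(x) for all x ∈ S, f(z₀) ≠ 0, and f(z₀z₀) = f(σ(z₀)z₀) = 0. -/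
theorem stmt8 {S : Type*} [Semigroup S] (σ : S → S) (hσ : (∀ x y, σ (x * y) = σ x * σ y) ∨ (∀ x y, σ (x * y) = σ y * σ x))
    (hσσ : ∀ x, σ (σ x) = x)
    (z₀ : S) (hz : ∀ x, z₀ * x = x * z₀) (f : S → ℂ) (hf0 : f ≠ 0) (hf : ∀ x y, f (x * σ y * z₀) - f (x * y * z₀) = 2 * f x * f y) :
    (∀ x, f (σ x) = -f x) ∧ f z₀ ≠ 0 ∧ f (z₀ * z₀) = 0 ∧ f (σ z₀ * z₀) = 0 := by
  obtain ⟨a, ha⟩ : ∃ a, f a ≠ 0 := by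
    by_contra h
    push_neg at h
    exact hf0 (funext h)
  have odd : ∀ y, f (σ y) = -f y := by
    intro y
    have h1 := hf a y
    have h2 := hf a (σ y)
    rw [hσσ y] at h2
    have h3 : 2 * f a * (f y + f (σ y)) = 0 := by linear_combination -h1 - h2
    rcases mul_eq_zero.mp h3 with h4 | h4
    · exact ((mul_ne_zero two_ne_zero ha) h4).elim
    · linear_combination h4
  have hH : ∀ x y, f (x * (σ y * (z₀ * z₀))) - f (x * (y * (z₀ * z₀))) = 2 * (f (x * z₀) * f y) := by
    intro x y
    have h := hf (x*z₀) y
    simp only [mul_assoc, hz] at h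
    exact h
  have hI : ∀ x y, f (x*z₀) * f y = f x * f (y*z₀) - f (x*σ y) * f z₀ := by
    intro x y
    rcases hσ with hm | hm
    · have hA1 := hf (x*σ y) z₀
      have hA2 := hf x (y*z₀)
      rw [hm] at hA2
      simp only [mul_assoc, hz] at hA1 hA2
      linear_combination (hA2 - hA1 - hH x y)/2
    · have hA1 := hf (x*σ y) z₀
      have hA2 := hf x (z₀*y)
      rw [hm] at hA2
      simp only [mul_assoc, hz] at hA1 hA2
      linear_combination (hA2 - hA1 - hH x y)/2
  have hI' : ∀ x y, f (x*z₀) * f y = f x * f (y*σ z₀) + f (x*y) * f z₀ := by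
    intro x y
    rcases hσ with hm | hm
    · have hB := hf (x*y) z₀
      have hC := hf x (y*σ z₀)
      rw [hm, hσσ] at hC
      simp only [mul_assoc, hz] at hB hC
      linear_combination (hB + hC - hH x y)/2
    · have hB := hf (x*y) z₀
      have hC := hf x (y*σ z₀)
      rw [hm, hσσ] at hC
      simp only [mul_assoc, hz] at hB hC
      linear_combination (hB + hC - hH x y)/2
  have hP : f (z₀ * σ z₀) = 0 := by
    have h := hI' a z₀
    have h2 : f a * f (z₀ * σ z₀) = 0 := by linear_combination -h
    exact (mul_eq_zero.mp h2).resolve_left ha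
  have hz0 : f z₀ ≠ 0 := by
    intro h0
    have key : ∀ y, f a * f (y*z₀) = f (a*z₀) * f y := by
      intro y
      linear_combination (-1) * hI a y + f (a*σ y) * h0
    have e := hf z₀ a
    simp only [mul_assoc, hz] at e
    -- e : f (σ a * (z₀ * z₀)) - f (a * (z₀ * z₀)) = 2 * f z₀ * f a
    have k1 := key (σ a * z₀)
    have k2 := key (a * z₀)
    simp only [mul_assoc] at k1 k2
    have k3 := key (σ a)
    have k4 := key a
    have ko := odd a
    -- f a ^2 * e: -(f(az₀))^2 f a - (f(az₀))^2 f a = 2 f z₀ f a^3 = 0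
    have hval : 2 * (f (a*z₀))^2 * f a = 0 := by
      have h5 : f a ^ 2 * (f (σ a * (z₀ * z₀)) - f (a * (z₀ * z₀))) = 2 * f z₀ * f a * f a ^2 := by
        linear_combination (f a ^ 2) * e
      linear_combination -h5 + f a * k1 - f a * k2 + f (a*z₀) * k3 - f (a*z₀) * k4 + (f (a*z₀))^2 * ko - 2*(f a^3) * h0
    have hz₀a : f (a*z₀) = 0 := by
      rcases mul_eq_zero.mp hval with h5 | h5
      · rcases mul_eq_zero.mp h5 with h6 | h6
        · exact absurd h6 two_ne_zero
        · exact pow_eq_zero_iff (two_ne_zero) |>.mp h6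
      · exact (ha h5).elim
    have kz : ∀ y, f (y*z₀) = 0 := by
      intro y
      have := key y
      rw [hz₀a] at this
      simp only [zero_mul] at this
      exact (mul_eq_zero.mp this).resolve_left ha
    have e2 := hf a a
    rw [kz (a*σ a), kz (a*a)] at e2
    have : f a * f a = 0 := by linear_combination -e2/2
    exact ha ((mul_self_eq_zero).mp this)
  have hD : ∀ x y, f x * (f (y*z₀) - f (y*σ z₀)) = f z₀ * (f (x*σ y) + f (x*y)) := by
    intro x y
    linear_combination hI' x y - hI x y
  have hM : ∀ x y, f (x*z₀) * (f (y*z₀) - f (y*σ z₀)) = 2*f z₀*(f (x*(y*z₀)) + f x * f y) := by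
    intro x y
    have h := hD (x*z₀) y
    have e := hf x y
    simp only [mul_assoc, hz] at h e
    linear_combination h + f z₀ * e
  have hN : ∀ x, f (x*z₀) * f (z₀*z₀) = 2*f z₀*(f (x*(z₀*z₀)) + f x * f z₀) := by
    intro x
    have h := hM x z₀
    rw [hP] at h
    linear_combination h
  have candd : ∀ y, f (z₀*z₀) * f (y*σ z₀) = 0 := by
    intro y
    have h1 := hM z₀ y
    simp only [hz, mul_assoc] at h1
    have h2 := hN y
    linear_combination h2 - h1
  have hc : f (z₀*z₀) = 0 := by
    by_contra hc
    have hv : ∀ y, f (y*σ z₀) = 0 := fun y => (mul_eq_zero.mp (candd y)).resolve_left hc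
    have hQ : ∀ y, f z₀ * f (y*z₀) = f (z₀*z₀) * f y := by
      intro y
      have h := hI' z₀ y
      rw [hv y, hz y] at h
      linear_combination -h
    have e := hf a z₀
    have q1 := hQ (a*σ z₀)
    rw [hv a] at q1
    have q2 := hQ (a*z₀)
    have q3 := hQ a
    have hmu : f a * (f (z₀*z₀)^2 + 2 * f z₀^3) = 0 := by
      linear_combination (-(f z₀^2)) * e + f z₀ * q1 - f z₀ * q2 - f (z₀*z₀) * q3
    have hmu' : f (z₀*z₀)^2 = -2 * f z₀^3 := by
      rcases mul_eq_zero.mp hmu with h | h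
      · exact (ha h).elim
      · linear_combination h
    have hBB : ∀ x y, f (z₀*z₀) * (f x * f y) = f z₀^2 * (f (x*σ y) + f (x*y)) := by
      intro x y
      have h := hD x y
      rw [hv y] at h
      have q := hQ y
      linear_combination f z₀ * h - f x * q
    have hEE : ∀ x y, f (z₀*z₀) * (f (x*σ y) - f (x*y)) = 2 * f z₀ * (f x * f y) := by
      intro x y
      have e := hf x y
      have q1 := hQ (x*σ y)
      have q2 := hQ (x*y)
      linear_combination f z₀ * e - q1 + q2
    have hzero : ∀ x y, f (x * σ y) = 0 := by
      intro x y
      have h1 := hBB x y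
      have h2 := hEE x y
      have key : f z₀^3 * (4 * f (x*σ y)) = 0 := by
        linear_combination (-2*f z₀)*h1 - f (z₀*z₀)*h2 + (f (x*σ y) - f (x*y))*hmu'
      have h4 := (mul_eq_zero.mp key).resolve_left (pow_ne_zero 3 hz0)
      have h5 := (mul_eq_zero.mp h4).resolve_left (by norm_num : (4:ℂ) ≠ 0)
      exact h5
    have hzero2 : ∀ x y, f (x*y) = 0 := by
      intro x y
      have h := hzero x (σ y)
      rwa [hσσ] at h
    have e2 := hf a a
    rw [hzero2 (a*σ a) z₀, hzero2 (a*a) z₀] at e2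
    have : f a * f a = 0 := by linear_combination -e2/2
    exact ha ((mul_self_eq_zero).mp this)
  refine ⟨odd, hz0, hc, ?_⟩
  rw [← hz (σ z₀)]
  exact hP
end

section
/- If f: S → ℂ is a nonzero solution of the Van Vleck equation f(xσ(y)z₀) − f(xyz₀) = 2f(x)f(y), then f(xσ(z₀)z₀) = f(x)f(z₀) and f(xz₀z₀) = −f(x)f(z₀) for all x ∈ S. -/
theorem stmt9 {S : Type*} [Semigroup S] (σ : S → S) (hσ : (∀ x y, σ (x * y) = σ x * σ y) ∨ (∀ x y, σ (x * y) = σ y * σ x))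
    (hσσ : ∀ x, σ (σ x) = x)
    (z₀ : S) (hz : ∀ x, z₀ * x = x * z₀) (f : S → ℂ) (hf0 : f ≠ 0) (hf : ∀ x y, f (x * σ y * z₀) - f (x * y * z₀) = 2 * f x * f y) :
    ∀ x, f (x * σ z₀ * z₀) = f x * f z₀ ∧ f (x * z₀ * z₀) = -(f x * f z₀) := by
  obtain ⟨x₀, hx₀⟩ : ∃ x, f x ≠ 0 := Function.ne_iff.mp hf0
  -- σ z₀ is central
  have hC1 : ∀ x, σ z₀ * x = x * σ z₀ := by
    intro x
    rcases hσ with h | h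
    · calc σ z₀ * x = σ z₀ * σ (σ x) := by rw [hσσ]
        _ = σ (z₀ * σ x) := (h _ _).symm
        _ = σ (σ x * z₀) := by rw [hz]
        _ = σ (σ x) * σ z₀ := h _ _
        _ = x * σ z₀ := by rw [hσσ]
    · calc σ z₀ * x = σ z₀ * σ (σ x) := by rw [hσσ]
        _ = σ (σ x * z₀) := (h _ _).symm
        _ = σ (z₀ * σ x) := by rw [hz]
        _ = σ (σ x) * σ z₀ := h _ _
        _ = x * σ z₀ := by rw [hσσ]
  have hC2 : ∀ x, σ (x * z₀) = σ x * σ z₀ := by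
    intro x
    rcases hσ with h | h
    · exact h x z₀
    · rw [← hz x, h z₀ x]
  have hC3 : ∀ x, σ (x * σ z₀) = σ x * z₀ := by
    intro x
    rcases hσ with h | h
    · rw [h, hσσ]
    · rw [← hC1 x, h, hσσ]
  -- f is odd
  have odd : ∀ y, f (σ y) = - f y := by
    intro y
    have h1 := hf x₀ y
    have h2 := hf x₀ (σ y)
    rw [hσσ] at h2
    have h3 : f x₀ * (2 * (f y + f (σ y))) = 0 := by linear_combination -h1 - h2
    rcases mul_eq_zero.mp h3 with h | h
    · exact absurd h hx₀
    · have : f y + f (σ y) = 0 := by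
        have h2ne : (2 : ℂ) ≠ 0 := two_ne_zero
        rcases mul_eq_zero.mp h with h' | h'
        · exact absurd h' h2ne
        · exact h'
      linear_combination this
  -- key identity A
  have hA : ∀ x y, f x * f (y * z₀) = f (x * σ y) * f z₀ + f x * f (y * σ z₀) + f (x * y) * f z₀ := by
    intro x y
    have I := hf x (y * z₀)
    have II := hf (x * σ y) z₀
    have IV := hf x (y * σ z₀)
    have III := hf (x * y) z₀
    rw [hC2 y] at I
    rw [hC3 y] at IV
    rw [show x * (σ y * σ z₀) * z₀ = x * σ y * σ z₀ * z₀ from by simp only [mul_assoc],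
        show x * (y * z₀) * z₀ = x * y * z₀ * z₀ from by simp only [mul_assoc]] at I
    rw [show x * (σ y * z₀) * z₀ = x * σ y * z₀ * z₀ from by simp only [mul_assoc],
        show x * (y * σ z₀) * z₀ = x * y * σ z₀ * z₀ from by simp only [mul_assoc]] at IV
    linear_combination (II + IV + III - I) / 2
  -- key identity B
  have hB : ∀ x z, f x * f (z * z₀) - f x * f (σ z * z₀)
      = f z * f (x * σ z₀) + f z * f (x * z₀) := by
    intro x z
    have I := hf x (z₀ * z)
    have II := hf (x * σ z₀) z
    have IV := hf x (z₀ * σ z)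
    have III := hf (x * z₀) z
    rw [hz z, hC2 z] at I
    rw [hz (σ z), hC2 (σ z), hσσ z] at IV
    -- normalize arguments
    rw [show x * (σ z * σ z₀) * z₀ = x * σ z₀ * σ z * z₀ from by
          rw [mul_assoc x (σ z₀) (σ z), hC1 (σ z)] ,
        show x * (z * z₀) * z₀ = x * z * z₀ * z₀ from by simp only [mul_assoc]] at I
    rw [show x * σ z₀ * σ z * z₀ = x * σ z₀ * σ z * z₀ from rfl,
        show x * σ z₀ * z * z₀ = x * z * σ z₀ * z₀ from by
          rw [mul_assoc x (σ z₀) z, hC1 z, ← mul_assoc]] at II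
    rw [show x * (z * σ z₀) * z₀ = x * z * σ z₀ * z₀ from by simp only [mul_assoc],
        show x * (σ z * z₀) * z₀ = x * σ z * z₀ * z₀ from by simp only [mul_assoc]] at IV
    rw [show x * z₀ * σ z * z₀ = x * σ z * z₀ * z₀ from by
          rw [mul_assoc x z₀ (σ z), hz (σ z), ← mul_assoc],
        show x * z₀ * z * z₀ = x * z * z₀ * z₀ from by
          rw [mul_assoc x z₀ z, hz z, ← mul_assoc]] at III
    linear_combination (II + IV + III - I) / 2
  -- f z₀ ≠ 0
  have hz₀ : f z₀ ≠ 0 := by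
    intro hfz
    have hstar : ∀ y, f (y * z₀) = f (y * σ z₀) := by
      intro y
      have h := hA x₀ y
      rw [hfz] at h
      have : f x₀ * f (y * z₀) = f x₀ * f (y * σ z₀) := by linear_combination h
      exact mul_left_cancel₀ hx₀ this
    have hodd' : ∀ z, f (σ z * z₀) = - f (z * z₀) := by
      intro z
      rw [hstar (σ z), ← hC2 z, odd (z * z₀)]
    have hFf : ∀ x z, f x * f (z * z₀) = f z * f (x * z₀) := by
      intro x z
      have h := hB x z
      rw [hodd' z, ← hstar x] at h
      linear_combination h / 2
    have hF : ∀ x, f (x * z₀) = f (x₀ * z₀) / f x₀ * f x := by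
      intro x
      rw [div_mul_eq_mul_div, eq_div_iff hx₀]
      linear_combination -(hFf x x₀)
    set c : ℂ := f (x₀ * z₀) / f x₀ with hc
    have hczero : c = 0 := by
      have h := hf z₀ x₀
      rw [show z₀ * σ x₀ * z₀ = σ x₀ * z₀ * z₀ from by rw [hz (σ x₀)],
          show z₀ * x₀ * z₀ = x₀ * z₀ * z₀ from by rw [hz x₀],
          hF (σ x₀ * z₀), hF (x₀ * z₀), hodd' x₀, hF x₀, hfz] at h
      have h2 : (-2 * c * c) * f x₀ = 0 := by linear_combination h
      rcases mul_eq_zero.mp h2 with h' | h'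
      · have : c * c = 0 := by linear_combination -h' / 2
        rcases mul_eq_zero.mp this with h'' | h'' <;> exact h''
      · exact absurd h' hx₀
    have h := hf x₀ x₀
    rw [hF (x₀ * σ x₀), hF (x₀ * x₀), hczero] at h
    have : f x₀ * f x₀ = 0 := by linear_combination -h / 2
    rcases mul_eq_zero.mp this with h' | h' <;> exact absurd h' hx₀
  -- the (◇) identity
  have hD0 : ∀ x y, f (x * (σ y * σ z₀)) + f (x * y * z₀) = -(2 * f x * f y) := by
    intro x y
    have h := hA x (y * z₀)
    rw [hC2 y] at h
    rw [show y * z₀ * σ z₀ = y * σ z₀ * z₀ from by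
          rw [mul_assoc y z₀ (σ z₀), hz (σ z₀), ← mul_assoc],
        show x * (y * z₀) = x * y * z₀ from by rw [mul_assoc]] at h
    have hE := hf y z₀
    have h2 : f z₀ * (f (x * (σ y * σ z₀)) + f (x * y * z₀) + 2 * f x * f y) = 0 := by
      linear_combination -h - f x * hE
    rcases mul_eq_zero.mp h2 with h' | h'
    · exact absurd h' hz₀
    · linear_combination h'
  intro x
  have h1 := hD0 x (σ z₀)
  rw [hσσ z₀] at h1
  rw [show x * (z₀ * σ z₀) = x * σ z₀ * z₀ from by rw [hz (σ z₀), ← mul_assoc],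
      odd z₀] at h1
  have h2 := hf x z₀
  constructor
  · linear_combination h1 / 2
  · linear_combination h1 / 2 - h2
end

section
/- If f: S → ℂ is a nonzero solution of f(xσ(y)z₀) − f(xyz₀) = 2f(x)f(y), then f(σ(x)z₀) = f(xz₀) for all x ∈ S. -/
theorem stmt10 {S : Type*} [Semigroup S] (σ : S → S) (hσ : (∀ x y, σ (x * y) = σ x * σ y) ∨ (∀ x y, σ (x * y) = σ y * σ x))
    (hσσ : ∀ x, σ (σ x) = x)
    (z₀ : S) (hz : ∀ x, z₀ * x = x * z₀) (f : S → ℂ) (hf0 : f ≠ 0) (hf : ∀ x y, f (x * σ y * z₀) - f (x * y * z₀) = 2 * f x * f y) :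
    ∀ x, f (σ x * z₀) = f (x * z₀) := by
  -- a point where f is nonzero
  obtain ⟨x₀, hx₀⟩ : ∃ x, f x ≠ 0 := by
    by_contra h
    push_neg at h
    exact hf0 (funext h)
  -- f is odd w.r.t. σ
  have hodd : ∀ y, f (σ y) = -f y := by
    intro y
    have h1 := hf x₀ y
    have h2 := hf x₀ (σ y)
    rw [hσσ] at h2
    have h3 : 2 * f x₀ * (f (σ y) + f y) = 0 := by linear_combination -h1 - h2
    rcases mul_eq_zero.1 h3 with h | h
    · rcases mul_eq_zero.1 h with h | h
      · norm_num at h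
      · exact absurd h hx₀
    · linear_combination h
  -- σ z₀ is central
  have hz2 : ∀ x, σ z₀ * x = x * σ z₀ := by
    intro x
    conv_lhs => rw [← hσσ x]
    rcases hσ with h | h
    · rw [← h, hz, h, hσσ]
    · rw [← h, ← hz, h, hσσ]
  -- σ (a * z₀) = σ a * σ z₀ in both cases
  have hσz : ∀ a, σ (a * z₀) = σ a * σ z₀ := by
    intro a
    rcases hσ with h | h
    · rw [h]
    · rw [h, hz2]
  -- the (*) identity, valid in both cases
  have star : ∀ x y, f (x * σ y) * f z₀ = f x * f (y * z₀) - f (x * z₀) * f y := by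
    intro x y
    have h1 := hf (x * z₀) y
    have h2 := hf x (y * z₀)
    have h3 := hf (x * σ y) z₀
    rw [hσz y] at h2
    simp only [mul_assoc, hz] at h1 h2 h3 ⊢
    linear_combination (-h1 + h2 - h3) / 2
  rcases hσ with hhom | hanti
  · -- homomorphism case
    have hProp : ∀ x y, f x * (f (σ y * z₀) - f (y * z₀)) = f y * (f (σ x * z₀) - f (x * z₀)) := by
      intro x y
      have h1 := star (σ x) y
      have h2 := star x (σ y)
      rw [hσσ] at h2
      rw [← hhom] at h1
      rw [hodd (x * y), hodd x] at h1
      rw [hodd y] at h2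
      linear_combination -h1 - h2
    obtain ⟨c, hc⟩ : ∃ c : ℂ, ∀ x, f (σ x * z₀) - f (x * z₀) = c * f x := by
      refine ⟨(f (σ x₀ * z₀) - f (x₀ * z₀)) / f x₀, fun x => ?_⟩
      have h := hProp x₀ x
      field_simp
      linear_combination h
    have key : ∀ x y, c * (f (x * σ y) - f (x * y)) = 0 := by
      intro x y
      have h1 := hf (σ x) (σ y)
      rw [hσσ] at h1
      rw [hodd x, hodd y] at h1
      have e1 : σ x * y = σ (x * σ y) := by rw [hhom, hσσ]
      have e2 : σ x * σ y = σ (x * y) := (hhom x y).symm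
      rw [e1, e2] at h1
      have h2 := hc (x * σ y)
      have h3 := hc (x * y)
      have h4 := hf x y
      linear_combination h1 - h2 + h3 - h4
    by_cases hcz : c = 0
    · intro x
      have := hc x
      rw [hcz] at this
      linear_combination this
    · exfalso
      have hsym : ∀ x y, f (x * σ y) = f (x * y) := by
        intro x y
        have h := key x y
        rcases mul_eq_zero.1 h with h | h
        · exact absurd h hcz
        · linear_combination h
      have hFz : ∀ x y, f (x * σ y * z₀) = f (x * y * z₀) := by
        intro x y
        have e1 := hsym (x * σ y) (σ z₀)
        rw [hσσ] at e1
        have e3 : σ y * σ z₀ = σ (y * z₀) := (hhom y z₀).symm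
        have e4 := hsym x (y * z₀)
        rw [e1, mul_assoc, e3, e4, ← mul_assoc]
      have h := hf x₀ x₀
      rw [hFz] at h
      have h0 : (2:ℂ) * f x₀ * f x₀ = 0 := by linear_combination -h
      rcases mul_eq_zero.1 h0 with h | h
      · rcases mul_eq_zero.1 h with h | h
        · norm_num at h
        · exact hx₀ h
      · exact hx₀ h
  · -- antihomomorphism case
    have A2 : ∀ x y, f (x * σ y * z₀) * f z₀ = f (x * z₀) * f (y * z₀) - f (x * z₀ * z₀) * f y := by
      intro x y
      have h := star (x * z₀) y
      have e : x * z₀ * σ y = x * σ y * z₀ := by simp only [mul_assoc, hz]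
      rw [e] at h
      exact h
    have A2' : ∀ x y, f (x * y * z₀) * f z₀ = f (x * z₀) * f (σ y * z₀) + f (x * z₀ * z₀) * f y := by
      intro x y
      have h := A2 x (σ y)
      rw [hσσ, hodd y] at h
      linear_combination h
    have T' : ∀ x, f (σ (x * z₀) * z₀) = f (σ x * z₀ * z₀) - 2 * f x * f z₀ := by
      intro x
      have h := hf (σ x) (σ z₀)
      rw [hσσ, hodd x, hodd z₀] at h
      rw [hσz x]
      linear_combination -h
    have hS : ∀ x y, (f (σ (y * x) * z₀) - f (y * x * z₀)) * f z₀ = -(f (σ x * z₀ * z₀) * f y) - f (y * z₀ * z₀) * f x := by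
      intro x y
      have hQ := A2 (σ x) y
      rw [show σ x * σ y = σ (y * x) from (hanti y x).symm] at hQ
      have hR := A2' y x
      linear_combination hQ - hR
    by_cases hfz : f z₀ = 0
    · -- subcase f z₀ = 0
      obtain ⟨k, hk⟩ : ∃ k : ℂ, ∀ x, f (x * z₀) = k * f x := by
        refine ⟨f (x₀ * z₀) / f x₀, fun x => ?_⟩
        have h := star x x₀
        rw [hfz] at h
        field_simp
        linear_combination h
      by_cases hkz : k = 0
      · intro x
        rw [hk (σ x), hk x, hkz]
        ring
      · exfalso
        have hdag : ∀ x y, k * (f (x * σ y) - f (x * y)) = 2 * f x * f y := by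
          intro x y
          have h := hf x y
          rw [hk (x * σ y), hk (x * y)] at h
          linear_combination h
        have hanti2 : ∀ x y, f (y * σ x) = -f (x * σ y) := by
          intro x y
          have h : σ (x * σ y) = y * σ x := by rw [hanti, hσσ]
          rw [← h, hodd]
        have hcc : ∀ x y, k * (f (x * y) + f (y * x)) = -4 * f x * f y := by
          intro x y
          have h1 := hdag x y
          have h2 := hdag y x
          rw [hanti2 x y] at h2
          linear_combination -h1 - h2
        have hcontra : (8:ℂ) * f x₀ * f x₀ = 0 := by
          have h1 := hcc x₀ x₀
          have h2 := hcc (σ x₀) (σ x₀)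
          rw [show σ x₀ * σ x₀ = σ (x₀ * x₀) from (hanti x₀ x₀).symm, hodd (x₀ * x₀), hodd x₀] at h2
          linear_combination h1 + h2
        rcases mul_eq_zero.1 hcontra with h | h
        · rcases mul_eq_zero.1 h with h | h
          · norm_num at h
          · exact hx₀ h
        · exact hx₀ h
    · -- subcase f z₀ ≠ 0
      have hW : ∀ y, f (σ y * z₀ * z₀) * f z₀ = 2 * f y * f z₀ * f z₀ - f (σ z₀ * z₀ * z₀) * f y := by
        intro y
        have h := hS z₀ y
        rw [T' y] at h
        linear_combination h
      have hV : ∀ x, 2 * (f (σ x * z₀ * z₀) * f z₀) = (f (x * z₀ * z₀) + 2 * f x * f z₀) * f z₀ - f (z₀ * z₀ * z₀) * f x := by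
        intro x
        have h := hS x z₀
        rw [hz x] at h
        rw [T' x] at h
        linear_combination h
      obtain ⟨β, hβ⟩ : ∃ β : ℂ, ∀ x, f (x * z₀ * z₀) = β * f x := by
        refine ⟨(2 * f z₀ * f z₀ + f (z₀ * z₀ * z₀) - 2 * f (σ z₀ * z₀ * z₀)) / f z₀, fun x => ?_⟩
        have h1 := hV x
        have h2 := hW x
        field_simp
        linear_combination 2 * h2 - h1
      have hGσ : ∀ x, f (σ x * z₀ * z₀) = -β * f x := by
        intro x
        have h := hβ (σ x)
        rw [hodd] at h
        linear_combination h
      have hS0 : ∀ x y, f (σ (y * x) * z₀) = f (y * x * z₀) := by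
        intro x y
        have h := hS x y
        rw [hGσ x, hβ y] at h
        have h2 : (f (σ (y * x) * z₀) - f (y * x * z₀)) * f z₀ = 0 := by linear_combination h
        rcases mul_eq_zero.1 h2 with h3 | h3
        · linear_combination h3
        · exact absurd h3 hfz
      have hX : ∀ x y, (f (σ x * z₀) - f (x * z₀)) * f (σ y * z₀) = (2 * f z₀ + 2 * β) * f x * f y := by
        intro x y
        have hE1 := A2' (σ x) y
        rw [hGσ x] at hE1
        have e1 : σ x * y = σ (σ y * x) := by rw [hanti, hσσ]
        rw [e1, hS0 x (σ y)] at hE1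
        have h5 := hf (σ y) (σ x)
        rw [hσσ] at h5
        rw [show σ y * σ x = σ (x * y) from (hanti x y).symm] at h5
        rw [hodd x, hodd y, hS0 y x] at h5
        have hE2 := A2' x y
        rw [hβ x] at hE2
        linear_combination hE2 - hE1 + f z₀ * h5
      by_cases hF0 : ∀ y, f (σ y * z₀) = 0
      · exfalso
        have hFall : ∀ y, f (y * z₀) = 0 := by
          intro y
          have h := hF0 (σ y)
          rwa [hσσ] at h
        have h := hf x₀ x₀
        rw [hFall (x₀ * σ x₀), hFall (x₀ * x₀)] at h
        have h0 : (2:ℂ) * f x₀ * f x₀ = 0 := by linear_combination -h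
        rcases mul_eq_zero.1 h0 with h | h
        · rcases mul_eq_zero.1 h with h | h
          · norm_num at h
          · exact hx₀ h
        · exact hx₀ h
      · push_neg at hF0
        obtain ⟨y₁, hy₁⟩ := hF0
        obtain ⟨c, hc⟩ : ∃ c : ℂ, ∀ x, f (σ x * z₀) - f (x * z₀) = c * f x := by
          refine ⟨(2 * f z₀ + 2 * β) * f y₁ / f (σ y₁ * z₀), fun x => ?_⟩
          have h := hX x y₁
          field_simp
          linear_combination h
        by_cases hcz : c = 0
        · intro x
          have h := hc x
          rw [hcz] at h
          linear_combination h
        · exfalso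
          have hprod : ∀ x y, f (y * x) = 0 := by
            intro x y
            have h1 := hc (y * x)
            rw [hS0 x y] at h1
            have h2 : c * f (y * x) = 0 := by linear_combination -h1
            rcases mul_eq_zero.1 h2 with h | h
            · exact absurd h hcz
            · exact h
          have h := hf x₀ x₀
          rw [hprod z₀ (x₀ * σ x₀), hprod z₀ (x₀ * x₀)] at h
          have h0 : (2:ℂ) * f x₀ * f x₀ = 0 := by linear_combination -h
          rcases mul_eq_zero.1 h0 with h | h
          · rcases mul_eq_zero.1 h with h | h
            · norm_num at h
            · exact hx₀ h
          · exact hx₀ h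
end

section
/- If f: S → ℂ is a nonzero solution of f(xσ(y)z₀) − f(xyz₀) = 2f(x)f(y), then g(x) := f(xz₀)/f(z₀) is a nonzero solution of d'Alembert's equation g(xy) + g(xσ(y)) = 2g(x)g(y) satisfying g(z₀) = 0 and g(z₀z₀) ≠ 0. -/
theorem stmt11 {S : Type*} [Semigroup S] (σ : S → S) (hσ : (∀ x y, σ (x * y) = σ x * σ y) ∨ (∀ x y, σ (x * y) = σ y * σ x))
    (hσσ : ∀ x, σ (σ x) = x)
    (z₀ : S) (hz : ∀ x, z₀ * x = x * z₀) (f : S → ℂ) (hf0 : f ≠ 0) (hf : ∀ x y, f (x * σ y * z₀) - f (x * y * z₀) = 2 * f x * f y)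
    (g : S → ℂ) (hg : ∀ x, g x = f (x * z₀) / f z₀) :
    g ≠ 0 ∧ (∀ x y, g (x * y) + g (x * σ y) = 2 * g x * g y) ∧
      g z₀ = 0 ∧ g (z₀ * z₀) ≠ 0 := by
  obtain ⟨a, ha⟩ : ∃ a, f a ≠ 0 := by
    by_contra h; push_neg at h; exact hf0 (funext h)
  have σz : ∀ y, σ (y * z₀) = σ y * σ z₀ := by
    rcases hσ with hm | hm
    · exact fun y => hm y z₀
    · intro y; rw [← hz y, hm]
  -- oddness
  have odd : ∀ y, f (σ y) = - f y := by
    intro y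
    have h1 := hf a y
    have h2 := hf a (σ y)
    rw [hσσ] at h2
    have h3 : 2 * f a * (f y + f (σ y)) = 0 := by linear_combination - h1 - h2
    have h4 := (mul_eq_zero.mp h3).resolve_left (mul_ne_zero two_ne_zero ha)
    linear_combination h4
  -- the sine subtraction identity
  have star : ∀ x y, f z₀ * f (x * σ y) = f x * f (y * z₀) - f (x * z₀) * f y := by
    intro x y
    have hI := hf (x * z₀) y
    have hII := hf x (y * z₀)
    have hIII := hf (x * σ y) z₀
    rw [σz] at hII
    simp only [mul_assoc, hz] at hI hII hIII
    linear_combination (hII - hIII - hI) / 2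
  -- f z₀ ≠ 0
  have hz0 : f z₀ ≠ 0 := by
    intro h0
    have hS : ∀ x y, f x * f (y * z₀) = f (x * z₀) * f y := by
      intro x y; have := star x y; rw [h0] at this; linear_combination - this
    set c := f (a * z₀) / f a with hc
    have hfy : ∀ y, f (y * z₀) = c * f y := by
      intro y
      rw [hc, div_mul_eq_mul_div, eq_div_iff ha]
      linear_combination hS a y
    have E0 : ∀ x y, c * f (x * σ y) - c * f (x * y) = 2 * f x * f y := by
      intro x y
      have := hf x y
      rw [hfy (x * σ y), hfy (x * y)] at this
      linear_combination this
    rcases hσ with hm | hm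
    · -- morphism case
      have hA := E0 a a
      have hB := E0 (σ a) (σ a)
      rw [hσσ] at hB
      have e1 : f (σ a * a) = - f (a * σ a) := by
        rw [show σ a * a = σ (a * σ a) by rw [hm, hσσ], odd]
      have e2 : f (σ a * σ a) = - f (a * a) := by rw [← hm, odd]
      have e3 : f (σ a) = - f a := odd a
      rw [e1, e2, e3] at hB
      have : f a * f a = 0 := by linear_combination - (hA + hB) / 4
      exact ha (mul_self_eq_zero.mp this)
    · -- antimorphism case
      have e1 : f (a * σ a) = 0 := by
        have h := odd (a * σ a)
        rw [show σ (a * σ a) = a * σ a from by rw [hm, hσσ]] at h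
        linear_combination h / 2
      have e2 : f (σ a * a) = 0 := by
        have h := odd (σ a * a)
        rw [show σ (σ a * a) = σ a * a from by rw [hm, hσσ]] at h
        linear_combination h / 2
      have hA := E0 a a
      have hB := E0 (σ a) a
      have e3 : f (σ a * σ a) = - f (a * a) := by rw [← hm, odd]
      have e4 : f (σ a) = - f a := odd a
      rw [e1] at hA
      rw [e3, e2, e4] at hB
      have : f a * f a = 0 := by linear_combination - (hA - hB) / 4
      exact ha (mul_self_eq_zero.mp this)
  -- key : f (z₀*z₀) * f (y*z₀) = 0
  have key : ∀ y, f (z₀ * z₀) * f (y * z₀) = 0 := by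
    intro y
    have hD := star z₀ (y * z₀)
    rw [σz] at hD
    have hQ := hf (σ y) z₀
    rw [odd] at hQ
    have hU := hf z₀ y
    simp only [mul_assoc, hz] at hD hQ hU
    linear_combination hD - f z₀ * hQ - f z₀ * hU
  have hzz : f (z₀ * z₀) = 0 := by
    by_contra h
    have hy : ∀ y, f (y * z₀) = 0 := fun y => (mul_eq_zero.mp (key y)).resolve_left h
    have hE := hf a a
    rw [hy (a * σ a), hy (a * a)] at hE
    have : f a * f a = 0 := by linear_combination - hE / 2
    exact ha (mul_self_eq_zero.mp this)
  -- ff : f (σ y * z₀) = f (y * z₀)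
  have ff : ∀ y, f (σ y * z₀) = f (y * z₀) := by
    intro y
    have h := star z₀ y
    rw [hzz, hz (σ y)] at h
    have h2 : f z₀ * f (σ y * z₀) = f z₀ * f (y * z₀) := by linear_combination h
    exact mul_left_cancel₀ hz0 h2
  -- d'Alembert on f level
  have dA : ∀ x y, f z₀ * (f (x * y * z₀) + f (x * σ y * z₀)) = 2 * f (x * z₀) * f (y * z₀) := by
    intro x y
    have hP := star (x * z₀) y
    have hP' := star (x * z₀) (σ y)
    rw [hσσ, ff, odd] at hP'
    simp only [mul_assoc, hz] at hP hP' ⊢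
    linear_combination hP + hP'
  -- conclusions
  have gz0 : g z₀ = 0 := by rw [hg, hzz, zero_div]
  have geq : ∀ x y, g (x * y) + g (x * σ y) = 2 * g x * g y := by
    intro x y
    rw [hg, hg, hg, hg]
    field_simp
    linear_combination dA x y
  have h3 : f (z₀ * z₀ * z₀) = - (f z₀ * f z₀) := by
    have hd := dA z₀ z₀
    rw [hzz] at hd
    have he := hf z₀ z₀
    have h4 : f z₀ * f (z₀ * z₀ * z₀) = f z₀ * (- (f z₀ * f z₀)) := by
      linear_combination (hd - f z₀ * he) / 2
    exact mul_left_cancel₀ hz0 h4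
  have gzz : g (z₀ * z₀) ≠ 0 := by
    rw [hg, h3]
    exact div_ne_zero (neg_ne_zero.mpr (mul_ne_zero hz0 hz0)) hz0
  exact ⟨fun h => gzz (by rw [h]; rfl), geq, gz0, gzz⟩
end

section
/- Let g: S → ℂ satisfy d'Alembert's equation g(xy) + g(xσ(y)) = 2g(x)g(y) with g(z₀) = 0 and g(z₀z₀) ≠ 0. Then f(x) := g(xσ(z₀)) = −g(xz₀) defines a nonzero solution of the Van Vleck equation f(xσ(y)z₀) − f(xyz₀) = 2f(x)f(y), and f(xz₀)/f(z₀) = g(x) for all x ∈ S. -/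
theorem stmt12 {S : Type*} [Semigroup S] (σ : S → S) (hσ : ∀ x y, σ (x * y) = σ x * σ y) (hσσ : ∀ x, σ (σ x) = x)
    (z₀ : S) (hz : ∀ x, z₀ * x = x * z₀) (g : S → ℂ)
    (hg : ∀ x y, g (x * y) + g (x * σ y) = 2 * g x * g y)
    (hg0 : g z₀ = 0) (hg1 : g (z₀ * z₀) ≠ 0)
    (f : S → ℂ) (hfdef : ∀ x, f x = g (x * σ z₀)) :
    (∀ x, f x = -g (x * z₀)) ∧ f ≠ 0 ∧
      (∀ x y, f (x * σ y * z₀) - f (x * y * z₀) = 2 * f x * f y) ∧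
      ∀ x, f (x * z₀) / f z₀ = g x := by
  have hz' : ∀ x, σ z₀ * x = x * σ z₀ := by
    intro x
    conv_lhs => rw [← hσσ x, ← hσ, hz, hσ, hσσ]
  have h1 : ∀ x, g (x * σ z₀) = - g (x * z₀) := by
    intro x
    have h := hg x z₀
    rw [hg0] at h
    linear_combination h
  have hf1 : ∀ x, f x = - g (x * z₀) := fun x => by rw [hfdef, h1]
  have e1 : ∀ x, g (x * z₀ * σ z₀) = - g (x * z₀ * z₀) := fun x => h1 (x * z₀)
  have e2 : ∀ x, g (x * σ z₀ * σ z₀) = g (x * z₀ * z₀) := by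
    intro x
    rw [h1 (x * σ z₀), mul_assoc, hz' z₀, ← mul_assoc, e1 x, neg_neg]
  have hA : ∀ x, g (x * z₀ * z₀) = g x * g (z₀ * z₀) := by
    intro x
    have h2 := hg x (z₀ * z₀)
    rw [hσ, ← mul_assoc, ← mul_assoc, e2] at h2
    linear_combination h2 / 2
  have hfz : f z₀ = - g (z₀ * z₀) := hf1 z₀
  refine ⟨hf1, ?_, ?_, ?_⟩
  · intro h
    apply hg1
    have := congrFun h z₀
    rw [hfz] at this
    simpa using this
  · intro x y
    rw [hf1 (x * σ y * z₀), hf1 (x * y * z₀), hA, hA]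
    have h3 := hg (x * σ z₀) (y * σ z₀)
    rw [hσ, hσσ] at h3
    have r1 : x * σ z₀ * (y * σ z₀) = x * y * σ z₀ * σ z₀ := by
      simp only [← mul_assoc]
      rw [mul_assoc x (σ z₀) y, hz' y, ← mul_assoc]
    have r2 : x * σ z₀ * (σ y * z₀) = x * σ y * z₀ * σ z₀ := by
      simp only [← mul_assoc]
      rw [mul_assoc x (σ z₀) (σ y), hz' (σ y), ← mul_assoc, mul_assoc (x * σ y) (σ z₀) z₀,
        hz' z₀, ← mul_assoc]
    rw [r1, r2, e2, hA, e1, hA, ← hfdef, ← hfdef] at h3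
    linear_combination h3
  · intro x
    rw [hf1 (x * z₀), hfz, hA, neg_div_neg_eq, mul_div_assoc, div_self hg1, mul_one]
end

section
/- If f: S → ℂ is a nonzero solution of f(xσ(y)z₀) − f(xyz₀) = 2f(x)f(y), then f and g(x) := f(xz₀)/f(z₀) satisfy the sine addition law f(xy) = f(x)g(y) + f(y)g(x) for all x,y ∈ S. -/
theorem stmt13 {S : Type*} [Semigroup S] (σ : S → S) (hσ : (∀ x y, σ (x * y) = σ x * σ y) ∨ (∀ x y, σ (x * y) = σ y * σ x))
    (hσσ : ∀ x, σ (σ x) = x)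
    (z₀ : S) (hz : ∀ x, z₀ * x = x * z₀) (f : S → ℂ) (hf0 : f ≠ 0) (hf : ∀ x y, f (x * σ y * z₀) - f (x * y * z₀) = 2 * f x * f y)
    (g : S → ℂ) (hg : ∀ x, g x = f (x * z₀) / f z₀) :
    ∀ x y, f (x * y) = f x * g y + f y * g x := by
  obtain ⟨x₁, hx₁⟩ : ∃ x, f x ≠ 0 := Function.ne_iff.mp hf0
  have two_ne : (2 : ℂ) ≠ 0 := two_ne_zero
  have hswap : ∀ a b : S, a * z₀ * b = a * b * z₀ := by
    intro a b
    rw [mul_assoc, hz b, ← mul_assoc]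
  -- f is odd with respect to σ
  have hodd : ∀ y, f (σ y) = - f y := by
    intro y
    have h1 := hf x₁ y
    have h2 := hf x₁ (σ y)
    rw [hσσ y] at h2
    have h3 : 2 * f x₁ * (f y + f (σ y)) = 2 * f x₁ * 0 := by
      rw [mul_zero]; linear_combination -h1 - h2
    have h4 := mul_left_cancel₀ (mul_ne_zero two_ne hx₁) h3
    linear_combination h4
  have hKz : ∀ x, f (x * σ z₀) = - f (σ x * z₀) := by
    intro x
    have hx : σ (x * σ z₀) = σ x * z₀ := by
      rcases hσ with hm | ha
      · rw [hm, hσσ]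
      · rw [ha, hσσ, hz]
    have h := hodd (x * σ z₀)
    rw [hx] at h
    linear_combination h
  -- the key identity
  have hKEY : ∀ x y, f (x * σ y) * f z₀ = f x * f (y * z₀) - f (x * z₀) * f y := by
    intro x y
    have hI := hf (x * z₀) y
    rw [hswap x (σ y), hswap x y] at hI
    have hVI := hf (x * σ y) z₀
    have hVII : f (x * σ y * σ z₀ * z₀) - f (x * y * z₀ * z₀) = 2 * f x * f (y * z₀) := by
      rcases hσ with hm | ha
      · have h := hf x (y * z₀)
        rw [hm y z₀, ← mul_assoc, ← mul_assoc] at h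
        exact h
      · have h := hf x (z₀ * y)
        rw [ha z₀ y, hz y, ← mul_assoc, ← mul_assoc] at h
        exact h
    linear_combination (hVII - hI - hVI) / 2
  by_cases ht : f z₀ = 0
  · -- degenerate case : leads to a contradiction
    exfalso
    have hFmul : ∀ u, f x₁ * f (u * z₀) = f (x₁ * z₀) * f u := by
      intro u
      have h := hKEY x₁ u
      rw [ht] at h
      linear_combination -h
    set l : ℂ := f (x₁ * z₀) / f x₁ with hl
    have hFl : ∀ u, f (u * z₀) = l * f u := by
      intro u
      rw [hl]
      field_simp
      linear_combination hFmul u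
    have hlne : l ≠ 0 := by
      intro h0
      have h1 := hf x₁ x₁
      rw [hFl (x₁ * σ x₁), hFl (x₁ * x₁), h0] at h1
      have h2 : f x₁ * f x₁ = 0 := by linear_combination -h1 / 2
      exact hx₁ (mul_self_eq_zero.mp h2)
    have hE : ∀ a b, l * (f (a * σ b) - f (a * b)) = 2 * f a * f b := by
      intro a b
      have h := hf a b
      rw [hFl (a * σ b), hFl (a * b)] at h
      linear_combination h
    rcases hσ with hm | ha
    · -- morphism case
      have hstar : ∀ x y z, f x * (f (y * z) + f (σ y * z)) = f z * (f (x * y) + f (x * σ y)) := by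
        intro x y z
        have d := hE x (y * z)
        rw [hm y z] at d
        simp only [← mul_assoc] at d
        have cc := hE (x * σ y) z
        have a' := hE x (σ y * z)
        rw [hm (σ y) z, hσσ y] at a'
        simp only [← mul_assoc] at a'
        have b := hE (x * y) z
        linear_combination (cc - d + b - a') / 2
      have hphi : ∀ x y, f x₁ * f (x * y) = f x * f (x₁ * y) := by
        intro x y
        have s1 := hstar x y x₁
        have s2 := hstar x₁ y x₁
        have q1 := hE x y
        have q2 := hE x₁ y
        have key : 2 * l * f x₁ * (f x₁ * f (x * y) - f x * f (x₁ * y)) = 2 * l * f x₁ * 0 := by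
          rw [mul_zero]
          linear_combination (-(l * f x₁)) * s1 - f x₁ * f x₁ * q1 + l * f x * s2 + f x * f x₁ * q2
        have h := mul_left_cancel₀ (mul_ne_zero (mul_ne_zero two_ne hlne) hx₁) key
        linear_combination h
      have hz1 : ∀ u, f (x₁ * σ u) = 0 := by
        intro u
        have big := hE x₁ (u * x₁)
        rw [hm u x₁] at big
        simp only [← mul_assoc] at big
        have p1 := hphi (x₁ * σ u) (σ x₁)
        have p2 := hphi (x₁ * u) x₁
        have p3 := hphi u x₁
        have e1' : l * (f (x₁ * σ u) * f (x₁ * σ x₁) - f (x₁ * u) * f (x₁ * x₁)) = 2 * f x₁ * f u * f (x₁ * x₁) := by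
          linear_combination f x₁ * big - l * p1 + l * p2 + 2 * f x₁ * p3
        have h6 : 2 * f x₁ * f x₁ * (l * f (x₁ * σ u)) = 0 := by
          linear_combination l * e1' + (2 * f x₁ * f x₁ - l * f (x₁ * σ x₁)) * (hE x₁ u) - (l * f (x₁ * u) + 2 * f x₁ * f u) * (hE x₁ x₁)
        have h7 := (mul_eq_zero.mp h6).resolve_left (mul_ne_zero (mul_ne_zero two_ne hx₁) hx₁)
        exact (mul_eq_zero.mp h7).resolve_left hlne
      have hall : ∀ y, f (x₁ * y) = 0 := by
        intro y
        have h := hz1 (σ y)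
        rwa [hσσ y] at h
      have h := hE x₁ x₁
      rw [hz1 x₁, hall x₁] at h
      have h0 : f x₁ * f x₁ = 0 := by linear_combination -h / 2
      exact hx₁ (mul_self_eq_zero.mp h0)
    · -- antimorphism case
      have hN : ∀ y z, l * (f (y * z) + f (σ z * y)) + 2 * f y * f z = 0 := by
        intro y z
        have e1 := hE (x₁ * σ z) y
        have e2 := hE x₁ (y * z)
        rw [ha y z] at e2
        simp only [← mul_assoc] at e2
        have e3 := hE x₁ (σ z * y)
        rw [ha (σ z) y, hσσ z] at e3
        simp only [← mul_assoc] at e3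
        have e4 := hE x₁ (z * y)
        rw [ha z y] at e4
        simp only [← mul_assoc] at e4
        have e5 := hE (x₁ * σ y) z
        have e6 := hE x₁ z
        have e7 := hE x₁ y
        have e8 := hE (x₁ * z) y
        have e9 := hE z y
        have e10 := hE x₁ (z * σ y)
        rw [ha z (σ y), hσσ y] at e10
        simp only [← mul_assoc] at e10
        have e11 := hE (x₁ * y) z
        have key : f x₁ * (l * (f (y * z) + f (σ z * y)) + 2 * f y * f z) = f x₁ * 0 := by
          rw [mul_zero]
          linear_combination (-(1 : ℂ) / 2) * (l * (e2 - e1 + e3 - e4 + e5 + e10 - e11 + e8) - 2 * f y * e6 + 2 * f z * e7 + 2 * f x₁ * e9)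
        have h := mul_left_cancel₀ hx₁ key
        exact h
      have hoo : ∀ y z, f (σ y * z) = - f (σ z * y) := by
        intro y z
        have h := hodd (σ z * y)
        rw [ha (σ z) y, hσσ z] at h
        exact h
      have hA0 : f (σ x₁ * x₁) = 0 := by
        have h := hoo x₁ x₁
        linear_combination h / 2
      have hanti : l * (f (x₁ * x₁) + f (x₁ * x₁)) = 0 := by
        have h1 := hN x₁ (σ x₁)
        rw [hσσ x₁, hodd x₁] at h1
        have h2 := hE x₁ x₁
        linear_combination h1 - h2
      have hB0 : f (x₁ * x₁) = 0 := by
        have h' : l * (f (x₁ * x₁) * 2) = 0 := by linear_combination hanti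
        have h2 := (mul_eq_zero.mp h').resolve_left hlne
        exact (mul_eq_zero.mp h2).resolve_right two_ne
      have h := hN x₁ x₁
      rw [hB0, hA0] at h
      have h0 : f x₁ * f x₁ = 0 := by linear_combination h / 2
      exact hx₁ (mul_self_eq_zero.mp h0)
  · -- main case : f z₀ ≠ 0
    set c : ℂ := f (z₀ * z₀) / f z₀ with hcdef
    have hct : c * f z₀ = f (z₀ * z₀) := by
      rw [hcdef]; field_simp
    have hFσ : ∀ x, f (σ x * z₀) = f (x * z₀) - c * f x := by
      intro x
      have h := hKEY x z₀
      rw [hKz x] at h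
      have h2 : f (σ x * z₀) * f z₀ = (f (x * z₀) - c * f x) * f z₀ := by
        linear_combination -h + f x * hct
      exact mul_right_cancel₀ ht h2
    have hNL : ∀ a b, f (a * b) * f z₀ = f a * f (b * z₀) + f (a * z₀) * f b - c * f a * f b := by
      intro a b
      have h := hKEY a (σ b)
      rw [hσσ b, hFσ b, hodd b] at h
      linear_combination h
    have hFK : ∀ x y, f (x * σ y * z₀) * f z₀ = f (x * z₀) * f (y * z₀) - f (x * z₀ * z₀) * f y := by
      intro x y
      have h := hKEY (x * z₀) y
      rw [hswap x (σ y)] at h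
      exact h
    have hF2 : ∀ x, 2 * f (x * z₀ * z₀) = c * f (x * z₀) - 2 * f z₀ * f x := by
      intro x
      have h1 := hf x x₁
      have h2 := hFK x x₁
      have h3 := hFK x (σ x₁)
      rw [hσσ x₁, hFσ x₁, hodd x₁] at h3
      have h4 : 2 * f (x * z₀ * z₀) * f x₁ = (c * f (x * z₀) - 2 * f z₀ * f x) * f x₁ := by
        linear_combination h2 - h3 - f z₀ * h1
      exact mul_right_cancel₀ hx₁ h4
    have hFYZ : ∀ y z, 2 * f (y * z * z₀) * f z₀ = 2 * f (y * z₀) * f (z * z₀) - c * f y * f (z * z₀) - 2 * f z₀ * f y * f z := by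
      intro y z
      have h := hNL y (z * z₀)
      rw [← mul_assoc y z z₀] at h
      linear_combination 2 * h + f y * hF2 z
    have hA : ∀ x y z, c * f x * (f y * f (z * z₀) - f (y * z₀) * f z) = 0 := by
      intro x y z
      have n1 := hNL (x * y) z
      have n2 := hNL x y
      have n3 := hFYZ x y
      have n4 := hNL x (y * z)
      rw [← mul_assoc x y z] at n4
      have n5 := hFYZ y z
      have n6 := hNL y z
      linear_combination -(2 * f z₀ * n1 + 2 * (f (z * z₀) - c * f z) * n2 + f z * n3 - 2 * f z₀ * n4 - f x * n5 - 2 * (f (x * z₀) - c * f x) * n6)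
    have hc0 : c = 0 := by
      by_contra hc
      have hprop : ∀ y, f (y * z₀) * f x₁ = f y * f (x₁ * z₀) := by
        intro y
        have h := hA x₁ y x₁
        have h2 := (mul_eq_zero.mp h).resolve_left (mul_ne_zero hc hx₁)
        linear_combination -h2
      have hp1 := hprop (σ x₁)
      rw [hFσ x₁, hodd x₁] at hp1
      have hp2 := hprop z₀
      have h' : f z₀ * (c * f x₁) = f z₀ * f (x₁ * z₀) := by
        linear_combination hp2 + f x₁ * hct
      have hii := mul_left_cancel₀ ht h'
      have h9 : c * (f x₁ * f x₁) = 0 := by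
        linear_combination hp1 + 2 * f x₁ * hii
      exact hc ((mul_eq_zero.mp h9).resolve_right (mul_ne_zero hx₁ hx₁))
    intro x y
    rw [hg y, hg x]
    have h := hNL x y
    rw [hc0] at h
    field_simp
    linear_combination h
end

section
/- Any nonzero central solution f: S → ℂ of the Van Vleck equation f(xσ(y)z₀) − f(xyz₀) = 2f(x)f(y) has the form f = ((χ − χ∘σ)/2)·χ(σ(z₀)), where χ: S → ℂ is multiplicative with χ(z₀) ≠ 0 and χ(σ(z₀)) = −χ(z₀). -/
theorem stmt14 {S : Type*} [Semigroup S] (σ : S → S) (hσ : (∀ x y, σ (x * y) = σ x * σ y) ∨ (∀ x y, σ (x * y) = σ y * σ x))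
    (hσσ : ∀ x, σ (σ x) = x)
    (z₀ : S) (hz : ∀ x, z₀ * x = x * z₀) (f : S → ℂ) (hf0 : f ≠ 0)
    (hcentral : ∀ x y, f (x * y) = f (y * x)) (hf : ∀ x y, f (x * σ y * z₀) - f (x * y * z₀) = 2 * f x * f y) :
    ∃ χ : S → ℂ, (∀ x y, χ (x * y) = χ x * χ y) ∧ χ z₀ ≠ 0 ∧
      χ (σ z₀) = -χ z₀ ∧ ∀ x, f x = (χ x - χ (σ x)) / 2 * χ (σ z₀) := by
  obtain ⟨x₀, hx₀⟩ : ∃ x, f x ≠ 0 := by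
    by_contra hcon
    push_neg at hcon
    exact hf0 (funext fun x => hcon x)
  -- f is odd with respect to σ
  have hodd : ∀ y, f (σ y) = -f y := by
    intro y
    have e1 := hf x₀ y
    have e2 := hf x₀ (σ y)
    rw [hσσ y] at e2
    have key : f x₀ * (f y + f (σ y)) = 0 := by linear_combination (-1/2) * e1 + (-1/2) * e2
    have h2 := (mul_eq_zero.mp key).resolve_left hx₀
    linear_combination h2
  -- rotation lemma
  have hrot : ∀ a b, f (a*b*z₀) = f (b*a*z₀) := by
    intro a b
    calc f (a*b*z₀) = f (a*(b*z₀)) := by rw [mul_assoc]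
      _ = f ((b*z₀)*a) := hcentral a (b*z₀)
      _ = f (b*(z₀*a)) := by rw [mul_assoc]
      _ = f (b*(a*z₀)) := by rw [hz a]
      _ = f (b*a*z₀) := by rw [mul_assoc]
  have hcyc : ∀ a b c, f (a*b*c*z₀) = f (c*a*b*z₀) := by
    intro a b c
    have h1 := hrot (a*b) c
    rw [mul_assoc c a b]
    exact h1
  have he3 : ∀ x y z, f (x*σ y*z*z₀) = f (z*x*y*z₀) + 2*f (z*x)*f y := by
    intro x y z
    have r1 := hcyc x (σ y) z
    have r2 := hf (z*x) y
    linear_combination r1 + r2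
  -- key identity E1
  have hE1 : ∀ x y z, 2*f (x*z)*f y = f z*(f (x*y) - f (x*σ y)) + f x*(f (z*y) - f (z*σ y)) := by
    rcases hσ with hh | hh
    · -- homomorphism case
      have H1 : ∀ x y z, 2*f (z*x)*f y = 2*f x*f (y*z) - 2*f (x*σ y)*f z := by
        intro x y z
        have A := hf x (y*z)
        rw [hh y z] at A
        have B := hf (x*σ y) z
        have e1 : f (x*(σ y*σ z)*z₀) = f (x*σ y*σ z*z₀) := by rw [← mul_assoc x (σ y) (σ z)]
        have e2 : f (x*(y*z)*z₀) = f (x*y*z*z₀) := by rw [← mul_assoc x y z]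
        have e3 := he3 x y z
        have e4 := hcyc x y z
        linear_combination A - B - e1 + e2 - e3 + e4
      intro x y z
      have p := H1 x y z
      have q := H1 z y x
      linear_combination (1/2)*p + (1/2)*q - f y * hcentral z x + f z * hcentral y x + f x * hcentral y z
    · -- anti-homomorphism case
      have hC : ∀ x y z, f (x*y*z*z₀) + 2*f (z*x)*f y - f (x*z*y*z₀) = 2*f x*f (z*y) - 2*f (x*σ y)*f z := by
        intro x y z
        have A := hf x (z*y)
        rw [hh z y] at A
        have B := hf (x*σ y) z
        have e1 : f (x*(σ y*σ z)*z₀) = f (x*σ y*σ z*z₀) := by rw [← mul_assoc x (σ y) (σ z)]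
        have e2 : f (x*(z*y)*z₀) = f (x*z*y*z₀) := by rw [← mul_assoc x z y]
        have e3 := he3 x y z
        have e4 := hcyc x y z
        linear_combination A - B - e1 + e2 - e3 + e4
      intro x y z
      have p := hC x y z
      have q := hC z y x
      have c4 := hcyc z y x
      have c5 := hcyc x y z
      linear_combination (1/2)*p + (1/2)*q - (1/2)*c4 - (1/2)*c5 - f y * hcentral z x
  -- sine addition law
  obtain ⟨h, hS⟩ : ∃ h : S → ℂ, ∀ x y, f (x*y) = f x * h y + h x * f y := by
    refine ⟨fun x => (f (x*x₀) - f (x*σ x₀)) / (2*f x₀), fun a c => ?_⟩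
    have e := hE1 a x₀ c
    have h2 : (2:ℂ)*f x₀ ≠ 0 := mul_ne_zero two_ne_zero hx₀
    field_simp
    linear_combination e
  -- h is σ-even
  have heven : ∀ y, h (σ y) = h y := by
    intro y
    have e := hE1 x₀ y x₀
    have s1 := hS x₀ x₀
    have s2 := hS x₀ y
    have s3 := hS x₀ (σ y)
    have o := hodd y
    have key : f x₀ * (f x₀ * (h y - h (σ y))) = 0 := by
      linear_combination (-1/2 : ℂ) * e + f y * s1 - f x₀ * s2 + f x₀ * s3 + f x₀ * h x₀ * o
    have h1 := (mul_eq_zero.mp key).resolve_left hx₀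
    have h2 := (mul_eq_zero.mp h1).resolve_left hx₀
    linear_combination -h2
  -- multiplicativity structure of h
  have hM : ∀ x y z, f x * (h (y*z) - h y * h z) = f z * (h (x*y) - h x * h y) := by
    intro x y z
    have a1 := hS x (y*z)
    have a2 := hS (x*y) z
    have a3 := hS y z
    have a4 := hS x y
    have ea : f (x*(y*z)) = f (x*y*z) := by rw [mul_assoc]
    linear_combination (-1)*a1 + ea + a2 - h x * a3 + h z * a4
  obtain ⟨l, hl⟩ : ∃ l : ℂ, ∀ y z, h (y*z) = h y * h z + l * f y * f z := by
    refine ⟨(h (x₀*x₀) - h x₀*h x₀)/(f x₀*f x₀), fun y z => ?_⟩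
    have e1 := hM x₀ y z
    have e2 := hM x₀ x₀ y
    field_simp
    linear_combination f x₀ * e1 + f z * e2
  -- the relation at z₀
  have hR : ∀ x y, h x * f y * h z₀ + (l * f z₀ + 1) * (f x * f y) = 0 := by
    intro x y
    have b0 := hf x y
    have b1 := hS (x*σ y) z₀
    have b2 := hS (x*y) z₀
    have b3 := hS x (σ y)
    have b4 := hS x y
    have b5 := hl x (σ y)
    have b6 := hl x y
    rw [heven y, hodd y] at b3 b5
    linear_combination (-1/2:ℂ)*b0 + (1/2:ℂ)*b1 - (1/2:ℂ)*b2 + (h z₀/2)*b3 - (h z₀/2)*b4 + (f z₀/2)*b5 - (f z₀/2)*b6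
  have hlz : l * f z₀ = -1 := by
    have r1 := hR x₀ x₀
    have r2 := hR (σ x₀) x₀
    rw [heven x₀, hodd x₀] at r2
    have key : (l * f z₀ + 1) * (f x₀ * f x₀) = 0 := by linear_combination (1/2)*r1 - (1/2)*r2
    have h1 := (mul_eq_zero.mp key).resolve_right (mul_ne_zero hx₀ hx₀)
    linear_combination h1
  have hhz : h z₀ = 0 := by
    have r := hR z₀ x₀
    have key : h z₀ * h z₀ * f x₀ = 0 := by linear_combination r - f z₀ * f x₀ * hlz
    have h1 := (mul_eq_zero.mp key).resolve_right hx₀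
    exact mul_self_eq_zero.mp h1
  have hfz : f z₀ ≠ 0 := by
    intro h0
    rw [h0, mul_zero] at hlz
    norm_num at hlz
  have hl0 : l ≠ 0 := by
    intro h0
    rw [h0, zero_mul] at hlz
    norm_num at hlz
  obtain ⟨μ, hμ⟩ : ∃ μ : ℂ, μ^2 = l := IsAlgClosed.exists_pow_nat_eq l zero_lt_two
  have hμ0 : μ ≠ 0 := by
    intro h0
    rw [h0] at hμ
    exact hl0 (by simpa using hμ.symm)
  refine ⟨fun x => h x + μ * f x, fun x y => ?_, ?_, ?_, fun x => ?_⟩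
  · show h (x*y) + μ * f (x*y) = (h x + μ * f x) * (h y + μ * f y)
    linear_combination hl x y + μ * hS x y - f x * f y * hμ
  · show h z₀ + μ * f z₀ ≠ 0
    rw [hhz, zero_add]
    exact mul_ne_zero hμ0 hfz
  · show h (σ z₀) + μ * f (σ z₀) = -(h z₀ + μ * f z₀)
    rw [heven z₀, hodd z₀, hhz]
    ring
  · show f x = ((h x + μ * f x) - (h (σ x) + μ * f (σ x))) / 2 * (h (σ z₀) + μ * f (σ z₀))
    rw [heven x, hodd x, heven z₀, hodd z₀, hhz]
    linear_combination f x * f z₀ * hμ + f x * hlz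
end

section
/- Let g: S → ℂ satisfy d'Alembert's equation g(xy) + g(xσ(y)) = 2g(x)g(y). If there exists a central element z₀ of S with g(z₀) = 0 and g(z₀z₀) ≠ 0, then there exists a nonzero multiplicative function χ: S → ℂ such that g = (χ + χ∘σ)/2. -/
theorem stmt15 {S : Type*} [Semigroup S] (σ : S → S) (hσ : ∀ x y, σ (x * y) = σ x * σ y) (hσσ : ∀ x, σ (σ x) = x)
    (g : S → ℂ) (hg : ∀ x y, g (x * y) + g (x * σ y) = 2 * g x * g y)
    (z₀ : S) (hz : ∀ x, z₀ * x = x * z₀) (hg0 : g z₀ = 0) (hg1 : g (z₀ * z₀) ≠ 0) :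
    ∃ χ : S → ℂ, χ ≠ 0 ∧ (∀ x y, χ (x * y) = χ x * χ y) ∧
      ∀ x, g x = (χ x + χ (σ x)) / 2 := by
  -- basic odd/even properties of h x = g (x * z₀)
  have e1 : ∀ x, g (x * σ z₀) = - g (x * z₀) := by
    intro x
    have h := hg x z₀
    rw [hg0] at h
    linear_combination h
  have e2 : ∀ x, g (σ x * z₀) = - g (x * z₀) := by
    intro x
    have h := hg z₀ x
    rw [hg0, hz x, hz (σ x)] at h
    linear_combination h
  -- sine addition and subtraction laws
  have sadd : ∀ x y, g (x * y * z₀) = g (x * z₀) * g y + g x * g (y * z₀) := by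
    intro x y
    have A := hg (x * z₀) y
    rw [mul_assoc x z₀ y, hz y, ← mul_assoc x y z₀,
        mul_assoc x z₀ (σ y), hz (σ y), ← mul_assoc x (σ y) z₀] at A
    have B := hg x (y * z₀)
    rw [hσ y z₀, ← mul_assoc x (σ y) (σ z₀), e1 (x * σ y), ← mul_assoc x y z₀] at B
    linear_combination (A + B) / 2
  have ssub : ∀ x y, g (x * σ y * z₀) = g (x * z₀) * g y - g x * g (y * z₀) := by
    intro x y
    have A := hg (x * z₀) y
    rw [mul_assoc x z₀ y, hz y, ← mul_assoc x y z₀,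
        mul_assoc x z₀ (σ y), hz (σ y), ← mul_assoc x (σ y) z₀] at A
    have B := hg x (y * z₀)
    rw [hσ y z₀, ← mul_assoc x (σ y) (σ z₀), e1 (x * σ y), ← mul_assoc x y z₀] at B
    linear_combination (A - B) / 2
  have hzz : ∀ x, g (x * z₀ * z₀) = g (z₀ * z₀) * g x := by
    intro x
    have h := sadd x z₀
    rw [hg0] at h
    linear_combination h
  -- g is σ-even
  have gσ : ∀ x, g (σ x) = g x := by
    intro x
    have t1 : g (x * σ z₀ * z₀) = - (g (z₀ * z₀) * g x) := by
      have h := ssub x z₀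
      rw [hg0] at h
      linear_combination h
    have t2 := e2 (x * σ z₀)
    rw [hσ x (σ z₀), hσσ z₀] at t2
    have t3 := hzz (σ x)
    have : g (z₀ * z₀) * g (σ x) = g (z₀ * z₀) * g x := by
      rw [← t3, t2, t1]; ring
    exact mul_left_cancel₀ hg1 this
  -- key identity
  have Hkey : ∀ x y, g (z₀ * z₀) * (g (x * y) - g (x * σ y)) =
      2 * (g (x * z₀) * g (y * z₀)) := by
    intro x y
    have A := sadd (x * z₀) y
    have B := ssub (x * z₀) y
    rw [mul_assoc x z₀ y, hz y, ← mul_assoc x y z₀] at A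
    rw [mul_assoc x z₀ (σ y), hz (σ y), ← mul_assoc x (σ y) z₀] at B
    rw [hzz (x * y), hzz x] at A
    rw [hzz (x * σ y), hzz x] at B
    linear_combination A - B
  have gmul : ∀ x y, g (z₀ * z₀) * g (x * y) =
      g (z₀ * z₀) * (g x * g y) + g (x * z₀) * g (y * z₀) := by
    intro x y
    linear_combination (g (z₀ * z₀) * hg x y + Hkey x y) / 2
  -- square root of c
  obtain ⟨l, hl⟩ : ∃ l : ℂ, l ^ 2 = g (z₀ * z₀) := by
    obtain ⟨l, hl⟩ := Complex.isAlgClosed.exists_pow_nat_eq (g (z₀ * z₀)) (n := 2) (by norm_num)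
    exact ⟨l, hl⟩
  have hl0 : l ≠ 0 := by
    intro h
    apply hg1
    rw [← hl, h]; ring
  refine ⟨fun x => g x + g (x * z₀) / l, ?_, ?_, ?_⟩
  · intro h
    have h0 := congrFun h z₀
    simp only [Pi.zero_apply] at h0
    rw [hg0] at h0
    apply hg1
    field_simp at h0
    simpa using h0
  · intro x y
    have hm := gmul x y
    have hs := sadd x y
    rw [← hl] at hm
    field_simp
    linear_combination hm + l * hs
  · intro x
    have h1 : g (σ x) = g x := gσ x
    have h2 : g (σ x * z₀) = - g (x * z₀) := e2 x
    show g x = (g x + g (x * z₀) / l + (g (σ x) + g (σ x * z₀) / l)) / 2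
    rw [h1, h2]
    field_simp
    ring
end

section
/- Let δ > 0 and let f: S → ℂ be unbounded with |f(xyz₀) + f(xσ(y)z₀) − 2f(x)f(y)| ≤ δ for all x,y ∈ S. Then f(σ(x)) = f(x) for all x ∈ S. -/
theorem stmt16 {S : Type*} [Semigroup S] (σ : S → S) (hσ : (∀ x y, σ (x * y) = σ x * σ y) ∨ (∀ x y, σ (x * y) = σ y * σ x))
    (hσσ : ∀ x, σ (σ x) = x)
    (z₀ : S) (hz : ∀ x, z₀ * x = x * z₀) (δ : ℝ) (hδ : 0 < δ) (f : S → ℂ) (hub : ¬∃ M : ℝ, ∀ x, ‖f x‖ ≤ M)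
    (hf : ∀ x y, ‖f (x * y * z₀) + f (x * σ y * z₀) - 2 * f x * f y‖ ≤ δ) :
    ∀ x, f (σ x) = f x := by
  intro y
  by_contra hne
  apply hub
  set c : ℂ := f y - f (σ y) with hc
  have hc0 : c ≠ 0 := sub_ne_zero.mpr (Ne.symm hne)
  have hcpos : 0 < ‖c‖ := norm_pos_iff.mpr hc0
  refine ⟨δ / ‖c‖, fun x => ?_⟩
  have h1 := hf x y
  have h2 := hf x (σ y)
  rw [hσσ] at h2
  have key : ‖2 * f x * c‖ ≤ 2 * δ := by
    have heq : 2 * f x * c =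
        (f (x * σ y * z₀) + f (x * y * z₀) - 2 * f x * f (σ y))
        - (f (x * y * z₀) + f (x * σ y * z₀) - 2 * f x * f y) := by
      rw [hc]; ring
    rw [heq]
    calc ‖_‖ ≤ ‖f (x * σ y * z₀) + f (x * y * z₀) - 2 * f x * f (σ y)‖
          + ‖f (x * y * z₀) + f (x * σ y * z₀) - 2 * f x * f y‖ := by
            have h := norm_add_le
              (f (x * σ y * z₀) + f (x * y * z₀) - 2 * f x * f (σ y))
              (-(f (x * y * z₀) + f (x * σ y * z₀) - 2 * f x * f y))
            rw [← sub_eq_add_neg, norm_neg] at h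
            exact h
      _ ≤ 2 * δ := by linarith
  rw [le_div_iff₀ hcpos]
  have habs : ‖2 * f x * c‖ = 2 * (‖f x‖ * ‖c‖) := by
    simp [norm_mul, mul_assoc]
  nlinarith [norm_nonneg (f x), norm_nonneg c]
end

section
/- Let δ > 0 and let f: S → ℂ be unbounded with |f(xyz₀) + f(xσ(y)z₀) − 2f(x)f(y)| ≤ δ for all x,y ∈ S. Then f(z₀) ≠ 0, and moreover |f(xσ(z₀)z₀) − f(x)f(z₀)| ≤ δ/2 and |f(xz₀z₀) − f(x)f(z₀)| ≤ 3δ/2 for all x ∈ S. -/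
theorem stmt17 {S : Type*} [Semigroup S] (σ : S → S) (hσ : (∀ x y, σ (x * y) = σ x * σ y) ∨ (∀ x y, σ (x * y) = σ y * σ x))
    (hσσ : ∀ x, σ (σ x) = x)
    (z₀ : S) (hz : ∀ x, z₀ * x = x * z₀) (δ : ℝ) (hδ : 0 < δ) (f : S → ℂ) (hub : ¬∃ M : ℝ, ∀ x, ‖f x‖ ≤ M)
    (hf : ∀ x y, ‖f (x * y * z₀) + f (x * σ y * z₀) - 2 * f x * f y‖ ≤ δ) :
    f z₀ ≠ 0 ∧
      (∀ x, ‖f (x * σ z₀ * z₀) - f x * f z₀‖ ≤ δ / 2) ∧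
      ∀ x, ‖f (x * z₀ * z₀) - f x * f z₀‖ ≤ 3 * δ / 2 := by
  have hf' : ∀ x y, ‖f (x * y * z₀) + f (x * σ y * z₀) - 2 * f x * f y‖ ≤ δ := by
    intro x y
    exact hf x y
  have unb : ∀ M : ℝ, ∃ x, M < ‖f x‖ := by
    by_contra h
    push_neg at h
    obtain ⟨M, hM⟩ := h
    exact hub ⟨M, fun x => by exact hM x⟩
  obtain ⟨x₁, hx₁⟩ := unb 0
  have hx₁' : f x₁ ≠ 0 := by
    intro h
    rw [h, norm_zero] at hx₁
    exact lt_irrefl 0 hx₁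
  have key : ∀ (w : ℂ) (C : ℝ), (∀ y, ‖f y * w‖ ≤ C) → w = 0 := by
    intro w C hC
    by_contra hw
    obtain ⟨y, hy⟩ := unb (C / ‖w‖)
    have hwpos : 0 < ‖w‖ := norm_pos_iff.mpr hw
    have h1 : C < ‖f y‖ * ‖w‖ := (div_lt_iff₀ hwpos).mp hy
    have h2 := hC y
    rw [norm_mul] at h2
    linarith
  have habs5 : ∀ a b c d e : ℂ, ‖a + b - c - d + e‖ ≤ ‖a‖ + ‖b‖ + ‖c‖ + ‖d‖ + ‖e‖ := by
    intro a b c d e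
    have t1 := norm_add_le (a + b - c - d) e
    have t2 := norm_sub_le (a + b - c) d
    have t3 := norm_sub_le (a + b) c
    have t4 := norm_add_le a b
    linarith
  have hσz : ∀ a, σ z₀ * a = a * σ z₀ := by
    intro a
    rcases hσ with h | h
    · calc σ z₀ * a = σ z₀ * σ (σ a) := by rw [hσσ]
        _ = σ (z₀ * σ a) := (h z₀ (σ a)).symm
        _ = σ (σ a * z₀) := by rw [hz]
        _ = σ (σ a) * σ z₀ := h _ _
        _ = a * σ z₀ := by rw [hσσ]
    · calc σ z₀ * a = σ z₀ * σ (σ a) := by rw [hσσ]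
        _ = σ (σ a * z₀) := (h (σ a) z₀).symm
        _ = σ (z₀ * σ a) := by rw [hz]
        _ = σ (σ a) * σ z₀ := h _ _
        _ = a * σ z₀ := by rw [hσσ]
  have fσ : ∀ y, f (σ y) = f y := by
    intro y
    have hkey : 2 * (f (σ y) - f y) = 0 := by
      apply key _ (2 * δ)
      intro t
      have h1 := hf' t y
      have h2 := hf' t (σ y)
      rw [hσσ y] at h2
      have hid : f t * (2 * (f (σ y) - f y)) =
          (f (t * y * z₀) + f (t * σ y * z₀) - 2 * f t * f y) -
          (f (t * σ y * z₀) + f (t * y * z₀) - 2 * f t * f (σ y)) := by ring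
      rw [hid]
      calc ‖(f (t * y * z₀) + f (t * σ y * z₀) - 2 * f t * f y) -
          (f (t * σ y * z₀) + f (t * y * z₀) - 2 * f t * f (σ y))‖
          ≤ ‖f (t * y * z₀) + f (t * σ y * z₀) - 2 * f t * f y‖ +
            ‖f (t * σ y * z₀) + f (t * y * z₀) - 2 * f t * f (σ y)‖ := norm_sub_le _ _
        _ ≤ 2 * δ := by linarith
    have h2 : f (σ y) - f y = 0 := by
      have h3 : (2 : ℂ) ≠ 0 := two_ne_zero
      exact (mul_eq_zero.mp hkey).resolve_left h3
    exact sub_eq_zero.mp h2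
  have cid1 : ∀ k : S, (∀ a, k * a = a * k) → ∀ u w : S, u * k * z₀ * w * z₀ = u * w * z₀ * k * z₀ := by
    intro k hk u w
    rw [mul_assoc (u * k) z₀ w, hz w, mul_assoc u k (w * z₀), hk (w * z₀),
      ← mul_assoc u (w * z₀) k, ← mul_assoc u w z₀]
  have EC : ∀ k : S, (∀ a, k * a = a * k) → (∀ a, σ k * a = a * σ k) →
      ∀ x, f (x * k * z₀) + f (x * σ k * z₀) = 2 * f k * f x := by
    intro k hk hσk x
    have hkey : 2 * (f (x * k * z₀) + f (x * σ k * z₀) - 2 * f k * f x) = 0 := by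
      apply key _ (4 * δ + 2 * ‖f k‖ * δ)
      intro y
      have h1 := hf' x y
      have h2 := hf' (x * y * z₀) k
      have h3 := hf' (x * σ y * z₀) k
      have h4 := hf' (x * k * z₀) y
      have h5 := hf' (x * σ k * z₀) y
      rw [cid1 k hk x y, cid1 k hk x (σ y)] at h4
      rw [cid1 (σ k) hσk x y, cid1 (σ k) hσk x (σ y)] at h5
      have hid : f y * (2 * (f (x * k * z₀) + f (x * σ k * z₀) - 2 * f k * f x)) =
          (f (x * y * z₀ * k * z₀) + f (x * y * z₀ * σ k * z₀) - 2 * f (x * y * z₀) * f k)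
          + (f (x * σ y * z₀ * k * z₀) + f (x * σ y * z₀ * σ k * z₀) - 2 * f (x * σ y * z₀) * f k)
          - (f (x * y * z₀ * k * z₀) + f (x * σ y * z₀ * k * z₀) - 2 * f (x * k * z₀) * f y)
          - (f (x * y * z₀ * σ k * z₀) + f (x * σ y * z₀ * σ k * z₀) - 2 * f (x * σ k * z₀) * f y)
          + 2 * f k * (f (x * y * z₀) + f (x * σ y * z₀) - 2 * f x * f y) := by ring
      rw [hid]
      have hb5 : ‖2 * f k * (f (x * y * z₀) + f (x * σ y * z₀) - 2 * f x * f y)‖ ≤ 2 * ‖f k‖ * δ := by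
        have e : ‖2 * f k * (f (x * y * z₀) + f (x * σ y * z₀) - 2 * f x * f y)‖
            = 2 * ‖f k‖ * ‖f (x * y * z₀) + f (x * σ y * z₀) - 2 * f x * f y‖ := by
          rw [norm_mul, norm_mul]
          norm_num
        rw [e]
        exact mul_le_mul_of_nonneg_left h1 (by positivity)
      have hT := habs5
        (f (x * y * z₀ * k * z₀) + f (x * y * z₀ * σ k * z₀) - 2 * f (x * y * z₀) * f k)
        (f (x * σ y * z₀ * k * z₀) + f (x * σ y * z₀ * σ k * z₀) - 2 * f (x * σ y * z₀) * f k)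
        (f (x * y * z₀ * k * z₀) + f (x * σ y * z₀ * k * z₀) - 2 * f (x * k * z₀) * f y)
        (f (x * y * z₀ * σ k * z₀) + f (x * σ y * z₀ * σ k * z₀) - 2 * f (x * σ k * z₀) * f y)
        (2 * f k * (f (x * y * z₀) + f (x * σ y * z₀) - 2 * f x * f y))
      linarith [hT]
    have h3 : (2 : ℂ) ≠ 0 := two_ne_zero
    have := (mul_eq_zero.mp hkey).resolve_left h3
    exact sub_eq_zero.mp this
  have E1 := EC z₀ hz hσz
  have ccen : ∀ a, σ z₀ * z₀ * a = a * (σ z₀ * z₀) := by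
    intro a
    rw [mul_assoc, hz a, ← mul_assoc, hσz a, mul_assoc]
  have hσc : σ (σ z₀ * z₀) = σ z₀ * z₀ := by
    rcases hσ with h | h
    · rw [h, hσσ, hz]
    · rw [h, hσσ]
  have R : ∀ x, f (x * (σ z₀ * z₀) * z₀) = f (σ z₀ * z₀) * f x := by
    intro x
    have h := EC (σ z₀ * z₀) ccen (by rw [hσc]; exact ccen) x
    rw [hσc] at h
    linear_combination h / 2
  have hσcy : ∀ y, σ (σ z₀ * z₀ * y) = σ y * (σ z₀ * z₀) := by
    intro y
    rcases hσ with h | h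
    · rw [h, hσc, ccen]
    · rw [h, hσc]
  have H : ∀ x y, ‖f (σ z₀ * z₀) * (f (x * y) + f (x * σ y)) - 2 * f x * f (σ z₀ * z₀ * y)‖ ≤ δ := by
    intro x y
    have h1 := hf' x (σ z₀ * z₀ * y)
    rw [hσcy y] at h1
    have p1 : x * (σ z₀ * z₀ * y) * z₀ = x * y * (σ z₀ * z₀) * z₀ := by
      rw [ccen y, ← mul_assoc x y (σ z₀ * z₀)]
    have p2 : x * (σ y * (σ z₀ * z₀)) * z₀ = x * σ y * (σ z₀ * z₀) * z₀ := by
      rw [← mul_assoc x (σ y) (σ z₀ * z₀)]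
    rw [p1, p2, R (x * y), R (x * σ y)] at h1
    have hid : f (σ z₀ * z₀) * (f (x * y) + f (x * σ y)) - 2 * f x * f (σ z₀ * z₀ * y)
        = f (σ z₀ * z₀) * f (x * y) + f (σ z₀ * z₀) * f (x * σ y) - 2 * f x * f (σ z₀ * z₀ * y) := by
      ring
    rw [hid]
    exact h1
  have J : ∀ x y, ‖2 * f (σ z₀ * z₀) * f x * f y - 2 * f (x * z₀) * f (σ z₀ * z₀ * y)‖
      ≤ δ + ‖f (σ z₀ * z₀)‖ * δ := by
    intro x y
    have h1 := H (x * z₀) y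
    have p1 : x * z₀ * y = x * y * z₀ := by rw [mul_assoc, hz y, ← mul_assoc]
    have p2 : x * z₀ * σ y = x * σ y * z₀ := by rw [mul_assoc, hz (σ y), ← mul_assoc]
    rw [p1, p2] at h1
    have h2 := hf' x y
    have hid : 2 * f (σ z₀ * z₀) * f x * f y - 2 * f (x * z₀) * f (σ z₀ * z₀ * y)
        = (f (σ z₀ * z₀) * (f (x * y * z₀) + f (x * σ y * z₀)) - 2 * f (x * z₀) * f (σ z₀ * z₀ * y))
          - f (σ z₀ * z₀) * (f (x * y * z₀) + f (x * σ y * z₀) - 2 * f x * f y) := by ring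
    rw [hid]
    have hb : ‖f (σ z₀ * z₀) * (f (x * y * z₀) + f (x * σ y * z₀) - 2 * f x * f y)‖
        ≤ ‖f (σ z₀ * z₀)‖ * δ := by
      rw [norm_mul]
      exact mul_le_mul_of_nonneg_left h2 (norm_nonneg _)
    have ht := norm_sub_le
      (f (σ z₀ * z₀) * (f (x * y * z₀) + f (x * σ y * z₀)) - 2 * f (x * z₀) * f (σ z₀ * z₀ * y))
      (f (σ z₀ * z₀) * (f (x * y * z₀) + f (x * σ y * z₀) - 2 * f x * f y))
    linarith
  have hσxσz : ∀ x, σ (x * σ z₀) = σ x * z₀ := by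
    intro x
    rcases hσ with h | h
    · rw [h, hσσ]
    · rw [h, hσσ, hz]
  have hσzz : σ (z₀ * z₀) = σ z₀ * σ z₀ := by
    rcases hσ with h | h <;> rw [h]
  have hbeta : ∀ x, f (x * σ z₀) = f (σ x * z₀) := by
    intro x
    rw [← fσ (x * σ z₀), hσxσz x]
  have hz0 : f z₀ ≠ 0 := by
    intro h0
    have fσz : f (σ z₀) = 0 := by rw [fσ]; exact h0
    have fcc : f (σ z₀ * z₀ * (σ z₀ * z₀)) = 0 := by
      have p : σ z₀ * z₀ * (σ z₀ * z₀) = σ z₀ * (σ z₀ * z₀) * z₀ := by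
        rw [mul_assoc (σ z₀) z₀ (σ z₀ * z₀), hz (σ z₀ * z₀), ← mul_assoc]
      rw [p, R (σ z₀), fσz, mul_zero]
    have fc0 : f (σ z₀ * z₀) = 0 := by
      have h2 : 2 * (f (σ z₀ * z₀) * f (σ z₀ * z₀)) = 0 := by
        apply key _ (δ + ‖f (σ z₀ * z₀)‖ * δ)
        intro t
        have hJ := J t (σ z₀ * z₀)
        rw [fcc, mul_zero, sub_zero] at hJ
        have hid : f t * (2 * (f (σ z₀ * z₀) * f (σ z₀ * z₀)))
            = 2 * f (σ z₀ * z₀) * f t * f (σ z₀ * z₀) := by ring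
        rw [hid]
        exact hJ
      have := (mul_eq_zero.mp h2).resolve_left two_ne_zero
      exact mul_self_eq_zero.mp this
    have fcy : ∀ y, f (σ z₀ * z₀ * y) = 0 := by
      intro y
      have h2 : -(2 * f (σ z₀ * z₀ * y)) = 0 := by
        apply key _ δ
        intro t
        have hH := H t y
        rw [fc0, zero_mul, zero_sub] at hH
        have hid : f t * -(2 * f (σ z₀ * z₀ * y)) = -(2 * f t * f (σ z₀ * z₀ * y)) := by ring
        rw [hid]
        exact hH
      have := neg_eq_zero.mp h2
      have := (mul_eq_zero.mp this).resolve_left two_ne_zero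
      exact this
    have v0 : ∀ x, f (x * σ z₀ * z₀) = 0 := by
      intro x
      have p : x * σ z₀ * z₀ = σ z₀ * z₀ * x := by
        rw [mul_assoc x (σ z₀) z₀, ← ccen x]
      rw [p]
      exact fcy x
    have u0 : ∀ x, f (x * z₀ * z₀) = 0 := by
      intro x
      have h := E1 x
      rw [v0 x, h0] at h
      linear_combination h
    have qz0 : ∀ x, f (x * z₀) = 0 := by
      intro x
      have h2 : -(2 * f (x * z₀)) = 0 := by
        apply key _ δ
        intro y
        have h1 := hf' (x * z₀) y
        have p1 : x * z₀ * y = x * y * z₀ := by rw [mul_assoc, hz y, ← mul_assoc]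
        have p2 : x * z₀ * σ y = x * σ y * z₀ := by rw [mul_assoc, hz (σ y), ← mul_assoc]
        rw [p1, p2, u0 (x * y), u0 (x * σ y)] at h1
        have hid : f y * -(2 * f (x * z₀)) = (0 : ℂ) + 0 - 2 * f (x * z₀) * f y := by ring
        rw [hid]
        exact h1
      have := neg_eq_zero.mp h2
      exact (mul_eq_zero.mp this).resolve_left two_ne_zero
    have f0 : ∀ x, f x = 0 := by
      intro x
      have h2 : -(2 * f x) = 0 := by
        apply key _ δ
        intro y
        have h1 := hf' x y
        rw [qz0 (x * y), qz0 (x * σ y)] at h1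
        have hid : f y * -(2 * f x) = (0 : ℂ) + 0 - 2 * f x * f y := by ring
        rw [hid]
        exact h1
      have := neg_eq_zero.mp h2
      exact (mul_eq_zero.mp this).resolve_left two_ne_zero
    exact hx₁' (f0 x₁)
  -- existence of x₀ with f (x₀ * z₀) ≠ 0
  have x₀ex : ∃ x₀, f (x₀ * z₀) ≠ 0 := by
    by_contra h
    push_neg at h
    have hzero : ∀ x, f x = 0 := by
      intro x
      have e := E1 x
      rw [h (x * z₀), h (x * σ z₀)] at e
      have : 2 * f z₀ * f x = 0 := by linear_combination -e
      rcases mul_eq_zero.mp this with h1 | h1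
      · rcases mul_eq_zero.mp h1 with h2 | h2
        · exact absurd h2 two_ne_zero
        · exact absurd h2 hz0
      · exact h1
    exact hx₁' (hzero x₁)
  obtain ⟨x₀, hx₀⟩ := x₀ex
  set c : ℂ := f (σ z₀ * z₀) with hcdef
  set a : ℂ := c * f x₀ / f (x₀ * z₀) with hadef
  set Mv : ℝ := (δ + ‖c‖ * δ) / (2 * ‖f (x₀ * z₀)‖) with hMdef
  have hMv : ∀ s, ‖f (s * σ z₀ * z₀) - a * f s‖ ≤ Mv := by
    intro s
    have hJ := J x₀ s
    have p : σ z₀ * z₀ * s = s * σ z₀ * z₀ := by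
      rw [ccen s, ← mul_assoc s (σ z₀) z₀]
    rw [p] at hJ
    have hne : (2 : ℂ) * f (x₀ * z₀) ≠ 0 := mul_ne_zero two_ne_zero hx₀
    have hdiv : f (s * σ z₀ * z₀) - a * f s
        = (2 * f (x₀ * z₀) * f (s * σ z₀ * z₀) - 2 * c * f x₀ * f s) / (2 * f (x₀ * z₀)) := by
      rw [hadef]
      field_simp
    rw [hdiv, norm_div]
    have hd : ‖(2 : ℂ) * f (x₀ * z₀)‖ = 2 * ‖f (x₀ * z₀)‖ := by
      rw [norm_mul]
      norm_num
    rw [hd]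
    have hnum : ‖2 * f (x₀ * z₀) * f (s * σ z₀ * z₀) - 2 * c * f x₀ * f s‖ ≤ δ + ‖c‖ * δ := by
      rw [norm_sub_rev]
      have hid : 2 * c * f x₀ * f s - 2 * f (x₀ * z₀) * f (s * σ z₀ * z₀)
          = 2 * f (σ z₀ * z₀) * f x₀ * f s - 2 * f (x₀ * z₀) * f (s * σ z₀ * z₀) := by
        rw [hcdef]
      rw [hid]
      exact hJ
    rw [hMdef]
    have hpos : (0:ℝ) < 2 * ‖f (x₀ * z₀)‖ := by
      have : 0 < ‖f (x₀ * z₀)‖ := norm_pos_iff.mpr hx₀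
      linarith
    exact (div_le_div_iff_of_pos_right hpos).mpr hnum
  have hv : ∀ x, f (x * σ z₀ * z₀) = a * f x := by
    intro x
    have hkey : 2 * (f (x * σ z₀ * z₀) - a * f x) = 0 := by
      apply key _ (Mv + Mv + δ + 0 + ‖a‖ * δ)
      intro y
      have hEv := hf' (x * σ z₀ * z₀) y
      rw [cid1 (σ z₀) hσz x y, cid1 (σ z₀) hσz x (σ y)] at hEv
      have hEf := hf' x y
      have hm1 := hMv (x * y * z₀)
      have hm2 := hMv (x * σ y * z₀)
      have hid : f y * (2 * (f (x * σ z₀ * z₀) - a * f x)) =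
          (f (x * y * z₀ * σ z₀ * z₀) - a * f (x * y * z₀))
          + (f (x * σ y * z₀ * σ z₀ * z₀) - a * f (x * σ y * z₀))
          - (f (x * y * z₀ * σ z₀ * z₀) + f (x * σ y * z₀ * σ z₀ * z₀) - 2 * f (x * σ z₀ * z₀) * f y)
          - 0
          + a * (f (x * y * z₀) + f (x * σ y * z₀) - 2 * f x * f y) := by ring
      rw [hid]
      have hT := habs5
        (f (x * y * z₀ * σ z₀ * z₀) - a * f (x * y * z₀))
        (f (x * σ y * z₀ * σ z₀ * z₀) - a * f (x * σ y * z₀))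
        (f (x * y * z₀ * σ z₀ * z₀) + f (x * σ y * z₀ * σ z₀ * z₀) - 2 * f (x * σ z₀ * z₀) * f y)
        0
        (a * (f (x * y * z₀) + f (x * σ y * z₀) - 2 * f x * f y))
      have hb : ‖a * (f (x * y * z₀) + f (x * σ y * z₀) - 2 * f x * f y)‖ ≤ ‖a‖ * δ := by
        rw [norm_mul]
        exact mul_le_mul_of_nonneg_left hEf (norm_nonneg _)
      rw [norm_zero] at hT
      linarith
    have := (mul_eq_zero.mp hkey).resolve_left two_ne_zero
    exact sub_eq_zero.mp this
  have hu : ∀ x, f (x * z₀ * z₀) = (2 * f z₀ - a) * f x := by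
    intro x
    have h := E1 x
    rw [hv x] at h
    linear_combination h
  have halpha : ∀ x, a * f (x * z₀) = c * f x := by
    intro x
    have h := hv (x * z₀)
    have p : x * z₀ * σ z₀ * z₀ = x * (σ z₀ * z₀) * z₀ := by
      rw [mul_assoc x z₀ (σ z₀), hz (σ z₀)]
    rw [p, R x] at h
    exact h.symm
  have ha0 : a ≠ 0 := by
    intro h0
    have hc0 : c = 0 := by
      have h := halpha x₁
      rw [h0, zero_mul] at h
      exact (mul_eq_zero.mp h.symm).resolve_right hx₁'
    have v0 : ∀ x, f (x * σ z₀ * z₀) = 0 := fun x => by rw [hv x, h0, zero_mul]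
    have cσσ : ∀ t, σ z₀ * σ z₀ * t = t * (σ z₀ * σ z₀) := by
      intro t
      rw [mul_assoc, hσz t, ← mul_assoc, hσz t, mul_assoc]
    have hσσzz : σ (σ z₀ * σ z₀) = z₀ * z₀ := by
      rcases hσ with h | h <;> rw [h] <;> simp only [hσσ]
    have czz : ∀ t, z₀ * z₀ * t = t * (z₀ * z₀) := by
      intro t
      rw [mul_assoc, hz t, ← mul_assoc, hz t, mul_assoc]
    have e : ∀ x, f (x * (σ z₀ * σ z₀) * z₀) + f (x * (z₀ * z₀) * z₀) = 2 * f (σ z₀ * σ z₀) * f x := by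
      intro x
      have ee := EC (σ z₀ * σ z₀) cσσ (by rw [hσσzz]; exact czz) x
      rw [hσσzz] at ee
      exact ee
    have hfzz : f (σ z₀ * σ z₀) = f (z₀ * z₀) := by
      rw [← hσzz, fσ]
    have hq : ∀ x, f (x * z₀) = (f (z₀ * z₀) / f z₀) * f x := by
      intro x
      have ee := e x
      have p1 : x * (σ z₀ * σ z₀) * z₀ = x * σ z₀ * σ z₀ * z₀ := by
        rw [← mul_assoc x (σ z₀) (σ z₀)]
      have p2 : x * (z₀ * z₀) * z₀ = x * z₀ * z₀ * z₀ := by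
        rw [← mul_assoc x z₀ z₀]
      rw [p1, p2, v0 (x * σ z₀), hfzz] at ee
      have hu' := hu (x * z₀)
      rw [h0, sub_zero] at hu'
      rw [hu'] at ee
      -- ee : 0 + 2 * f z₀ * f (x * z₀) = 2 * f (z₀ * z₀) * f x
      field_simp
      linear_combination ee / 2
    have hrho2 : (f (z₀ * z₀) / f z₀) * (f (z₀ * z₀) / f z₀) = 2 * f z₀ := by
      have h1 := hu x₁
      rw [h0, sub_zero] at h1
      have h2 := hq (x₁ * z₀)
      rw [hq x₁] at h2
      rw [h2] at h1
      have h3 : ((f (z₀ * z₀) / f z₀) * (f (z₀ * z₀) / f z₀) - 2 * f z₀) * f x₁ = 0 := by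
        linear_combination h1
      have := (mul_eq_zero.mp h3).resolve_right hx₁'
      linear_combination this
    have hvx1 : f (x₁ * σ z₀ * z₀) = 2 * f z₀ * f x₁ := by
      have h1 := hq (x₁ * σ z₀)
      rw [hbeta x₁, hq (σ x₁), fσ x₁] at h1
      rw [h1]
      linear_combination (f x₁) * hrho2
    rw [v0 x₁] at hvx1
    have : f x₁ = 0 := by
      have h4 : 2 * f z₀ * f x₁ = 0 := hvx1.symm
      rcases mul_eq_zero.mp h4 with h5 | h5
      · rcases mul_eq_zero.mp h5 with h6 | h6
        · exact absurd h6 two_ne_zero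
        · exact absurd h6 hz0
      · exact h5
    exact hx₁' this
  -- a³ = c² and a²(2 f z₀ - a) = c², hence a = f z₀
  have cubeA : a * a * a * f x₁ = c * c * f x₁ := by
    have e1 : a * (a * f x₁) = c * f (x₁ * σ z₀) := by
      have h := halpha (x₁ * σ z₀)
      rw [hv x₁] at h
      exact h
    have e2 := halpha (σ x₁)
    rw [hbeta x₁] at e1
    calc a * a * a * f x₁ = a * (a * (a * f x₁)) := by ring
      _ = a * (c * f (σ x₁ * z₀)) := by rw [e1]
      _ = c * (a * f (σ x₁ * z₀)) := by ring
      _ = c * (c * f (σ x₁)) := by rw [e2]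
      _ = c * c * f x₁ := by rw [fσ]; ring
  have squareB : a * a * ((2 * f z₀ - a) * f x₁) = c * c * f x₁ := by
    have e1 : a * ((2 * f z₀ - a) * f x₁) = c * f (x₁ * z₀) := by
      have h := halpha (x₁ * z₀)
      rw [hu x₁] at h
      exact h
    have e2 := halpha x₁
    calc a * a * ((2 * f z₀ - a) * f x₁) = a * (a * ((2 * f z₀ - a) * f x₁)) := by ring
      _ = a * (c * f (x₁ * z₀)) := by rw [e1]
      _ = c * (a * f (x₁ * z₀)) := by ring
      _ = c * (c * f x₁) := by rw [e2]
      _ = c * c * f x₁ := by ring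
  have hab : a = f z₀ := by
    have e3 : 2 * (a * a) * ((a - f z₀) * f x₁) = 0 := by
      linear_combination cubeA - squareB
    have h4 : (a - f z₀) * f x₁ = 0 := by
      have hne : (2 : ℂ) * (a * a) ≠ 0 := mul_ne_zero two_ne_zero (mul_ne_zero ha0 ha0)
      exact (mul_eq_zero.mp e3).resolve_left hne
    have h5 : a - f z₀ = 0 := (mul_eq_zero.mp h4).resolve_right hx₁'
    exact sub_eq_zero.mp h5
  refine ⟨hz0, fun x => ?_, fun x => ?_⟩
  · rw [hv x, hab]
    have : f z₀ * f x - f x * f z₀ = 0 := by ring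
    rw [this, norm_zero]
    positivity
  · rw [hu x, hab]
    have : (2 * f z₀ - f z₀) * f x - f x * f z₀ = 0 := by ring
    rw [this, norm_zero]
    positivity
end

section
/- Let δ > 0. If f: S → ℂ satisfies |f(xyz₀) + f(xσ(y)z₀) − 2f(x)f(y)| ≤ δ for all x,y ∈ S, then either f is bounded with |f(x)| ≤ (1 + √(1 + 2δ))/2 for all x ∈ S, or f satisfies f(xyz₀) + f(xσ(y)z₀) = 2f(x)f(y) for all x,y ∈ S. -/
set_option maxHeartbeats 1600000 in
theorem stmt18 {S : Type*} [Semigroup S] (σ : S → S) (hσ : (∀ x y, σ (x * y) = σ x * σ y) ∨ (∀ x y, σ (x * y) = σ y * σ x))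
    (hσσ : ∀ x, σ (σ x) = x)
    (z₀ : S) (hz : ∀ x, z₀ * x = x * z₀) (δ : ℝ) (hδ : 0 < δ) (f : S → ℂ)
    (hf : ∀ x y, ‖f (x * y * z₀) + f (x * σ y * z₀) - 2 * f x * f y‖ ≤ δ) :
    (∀ x, ‖f x‖ ≤ (1 + Real.sqrt (1 + 2 * δ)) / 2) ∨
      ∀ x y, f (x * y * z₀) + f (x * σ y * z₀) = 2 * f x * f y := by
  by_cases hbd : ∀ x, ‖f x‖ ≤ (1 + Real.sqrt (1 + 2 * δ)) / 2
  · exact Or.inl hbd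
  right
  push_neg at hbd
  obtain ⟨x₀, hx₀⟩ := hbd
  set c : ℝ := (1 + Real.sqrt (1 + 2 * δ)) / 2 with hcdef
  -- basic facts about c
  have h1δ : (0:ℝ) ≤ 1 + 2 * δ := by linarith
  have hsq : Real.sqrt (1 + 2*δ) ^ 2 = 1 + 2*δ := Real.sq_sqrt h1δ
  have hsnn : 0 ≤ Real.sqrt (1 + 2*δ) := Real.sqrt_nonneg _
  have hs1 : 1 ≤ Real.sqrt (1 + 2*δ) := by nlinarith
  have hc1 : 1 ≤ c := by rw [hcdef]; linarith
  have hcc : c ^ 2 = c + δ/2 := by rw [hcdef]; field_simp; nlinarith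
  -- triangle helpers
  have tadd : ∀ p q : ℂ, ‖p + q‖ ≤ ‖p‖ + ‖q‖ :=
    fun p q => norm_add_le p q
  have tsub : ∀ p q : ℂ, ‖p - q‖ ≤ ‖p‖ + ‖q‖ := by
    intro p q
    rw [sub_eq_add_neg]
    exact (tadd p (-q)).trans (by rw [norm_neg])
  -- Step 1 : unboundedness
  have step : ∀ a, c < ‖f a‖ →
      ∃ b, c < ‖f b‖ ∧ 2*(‖f a‖ - c) ≤ ‖f b‖ - c := by
    intro a ha
    have h := hf a a
    have habs : 2*(‖f a‖)^2 - δ ≤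
        ‖f (a*a*z₀)‖ + ‖f (a*σ a*z₀)‖ := by
      have e1 : (2:ℂ) * f a * f a =
          (f (a*a*z₀) + f (a*σ a*z₀)) - (f (a*a*z₀) + f (a*σ a*z₀) - 2 * f a * f a) := by ring
      have e2 : ‖2 * f a * f a‖ ≤
          ‖f (a*a*z₀) + f (a*σ a*z₀)‖ +
          ‖f (a*a*z₀) + f (a*σ a*z₀) - 2 * f a * f a‖ :=
        (congrArg (‖·‖) e1).trans_le (tsub _ _)
      have e3 : ‖2 * f a * f a‖ = 2 * ((‖f a‖)*(‖f a‖)) := by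
        rw [norm_mul, norm_mul, Complex.norm_two]; ring
      have e4 := tadd (f (a*a*z₀)) (f (a*σ a*z₀))
      nlinarith [h, e2, e3, e4]
    rcases le_total (‖f (a*a*z₀)‖) (‖f (a*σ a*z₀)‖) with h'|h'
    · refine ⟨a*σ a*z₀, ?_, ?_⟩ <;> nlinarith
    · refine ⟨a*a*z₀, ?_, ?_⟩ <;> nlinarith
  have he₀ : 0 < ‖f x₀‖ - c := by linarith
  have growth : ∀ n : ℕ, ∃ a, c < ‖f a‖ ∧
      c + 2^n * (‖f x₀‖ - c) ≤ ‖f a‖ := by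
    intro n
    induction n with
    | zero => exact ⟨x₀, hx₀, by norm_num⟩
    | succ n ih =>
      obtain ⟨a, ha1, ha2⟩ := ih
      obtain ⟨b, hb1, hb2⟩ := step a ha1
      refine ⟨b, hb1, ?_⟩
      have h2 : (2:ℝ)^(n+1) = 2^n * 2 := by ring
      nlinarith [pow_pos (by norm_num : (0:ℝ) < 2) n]
  have unb : ∀ B : ℝ, ∃ a, B ≤ ‖f a‖ := by
    intro B
    obtain ⟨n, hn⟩ := pow_unbounded_of_one_lt ((B - c)/(‖f x₀‖ - c))
      (by norm_num : (1:ℝ) < 2)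
    obtain ⟨a, _, ha2⟩ := growth n
    have : B - c < 2^n * (‖f x₀‖ - c) := by
      rw [div_lt_iff₀ he₀] at hn; linarith
    exact ⟨a, by linarith⟩
  -- kill lemma
  have kill : ∀ z : ℂ, (∃ K : ℝ, ∀ a, ‖z‖ * ‖f a‖ ≤ K) → z = 0 := by
    rintro z ⟨K, hK⟩
    by_contra h0
    have hz0 : 0 < ‖z‖ := norm_pos_iff.mpr h0
    obtain ⟨a, ha⟩ := unb ((K+1)/‖z‖)
    have h1 := hK a
    have h2 : ‖z‖ * ((K+1)/‖z‖) ≤ ‖z‖ * ‖f a‖ :=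
      mul_le_mul_of_nonneg_left ha (le_of_lt hz0)
    have h3 : ‖z‖ * ((K+1)/‖z‖) = K + 1 := by field_simp
    linarith
  -- Step 2 : f ∘ σ = f
  have fσ : ∀ v, f (σ v) = f v := by
    intro v
    have key : ∀ a, ‖f (σ v) - f v‖ * ‖f a‖ ≤ δ := by
      intro a
      have h1 := hf a v
      have h2 := hf a (σ v)
      rw [hσσ] at h2
      have e : (2:ℂ)*((f (σ v) - f v)*f a) =
          (f (a*v*z₀) + f (a*σ v*z₀) - 2 * f a * f v) -
          (f (a*σ v*z₀) + f (a*v*z₀) - 2 * f a * f (σ v)) := by ring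
      have hA : ‖2*((f (σ v) - f v)*f a)‖ ≤ 2*δ := by
        rw [e]
        exact (tsub _ _).trans (by linarith [h1, h2])
      rw [norm_mul, norm_mul, Complex.norm_two] at hA
      linarith
    have := kill (f (σ v) - f v) ⟨δ, key⟩
    exact sub_eq_zero.mp this
  -- getβ : from the Ψ-estimate produce β with f (x z₀) = β f x
  have getβ : ∀ (Ψ : S → S → ℂ) (m : ℂ), m ≠ 0 →
      (∀ a u y, ‖2*f (a*z₀)*Ψ u y - m*(f a*(f u*f y))‖ ≤
        δ*(8 + 2*‖f u‖ + 2*‖f y‖)) →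
      ∃ β : ℂ, ∀ x, f (x*z₀) = β*f x := by
    intro Ψ m hm0 hΨ
    by_cases hΨ0 : ∀ u y, Ψ u y = 0
    · exfalso
      have key : ∀ a, ‖m*(f x₀*f x₀)‖ * ‖f a‖ ≤
          δ*(8 + 2*‖f x₀‖ + 2*‖f x₀‖) := by
        intro a
        have h := hΨ a x₀ x₀
        rw [hΨ0, mul_zero, zero_sub, norm_neg,
          show m*(f a*(f x₀*f x₀)) = m*(f x₀*f x₀)*f a from by ring, norm_mul] at h
        exact h
      have hmz := kill _ ⟨_, key⟩
      rcases mul_eq_zero.mp hmz with h | h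
      · exact hm0 h
      · have : f x₀ = 0 := by
          rcases mul_eq_zero.mp h with h' | h' <;> exact h'
        rw [this, norm_zero] at hx₀; linarith
    · push_neg at hΨ0
      obtain ⟨u₀, y₀, hΨne⟩ := hΨ0
      set K₀ : ℝ := δ*(8 + 2*‖f u₀‖ + 2*‖f y₀‖) with hK₀
      set β : ℂ := m*(f u₀*f y₀)/(2*Ψ u₀ y₀) with hβdef
      have h2Ψ : (2:ℂ)*Ψ u₀ y₀ ≠ 0 := mul_ne_zero two_ne_zero hΨne
      have hβΨ : β*(2*Ψ u₀ y₀) = m*(f u₀*f y₀) := div_mul_cancel₀ _ h2Ψ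
      set M : ℝ := K₀ / ‖2*Ψ u₀ y₀‖ with hM
      have h2Ψpos : 0 < ‖2*Ψ u₀ y₀‖ := norm_pos_iff.mpr h2Ψ
      have hr : ∀ a, ‖f (a*z₀) - β*f a‖ ≤ M := by
        intro a
        have h := hΨ a u₀ y₀
        have e : (2*Ψ u₀ y₀)*(f (a*z₀) - β*f a) =
            2*f (a*z₀)*Ψ u₀ y₀ - m*(f a*(f u₀*f y₀)) := by
          linear_combination (-(f a))*hβΨ
        have h2 : ‖2*Ψ u₀ y₀‖ * ‖f (a*z₀) - β*f a‖ ≤ K₀ := by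
          rw [← norm_mul, e]; exact h
        rw [hM, le_div_iff₀ h2Ψpos]
        linarith [h2]
      have ht : ∀ x y, ‖β*f (x*(y*z₀)) + β*f (x*(σ y*z₀)) - 2*(f (x*z₀)*f y)‖ ≤
          δ + (M+M) := by
        intro x y
        have h := hf (x*z₀) y
        have r1 := hr (x*(y*z₀))
        have r2 := hr (x*(σ y*z₀))
        simp only [mul_assoc, hz] at h r1 r2
        have e : β*f (x*(y*z₀)) + β*f (x*(σ y*z₀)) - 2*(f (x*z₀)*f y) =
            ((f (x*(y*(z₀*z₀))) + f (x*(σ y*(z₀*z₀))) - 2*(f (x*z₀)*f y))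
              - (f (x*(y*(z₀*z₀))) - β*f (x*(y*z₀))))
              - (f (x*(σ y*(z₀*z₀))) - β*f (x*(σ y*z₀))) := by ring
        have hb := (tsub _ _).trans (add_le_add ((tsub _ _).trans (add_le_add h r1)) r2)
        rw [e]
        linarith [hb]
      refine ⟨β, fun x => ?_⟩
      apply sub_eq_zero.mp
      apply kill (f (x*z₀) - β*f x)
      refine ⟨(‖β‖*δ + (δ + (M+M)))/2, fun a => ?_⟩
      have h1 := hf x a
      simp only [mul_assoc] at h1
      have h2 := ht x a
      have e : (2:ℂ)*((f (x*z₀) - β*f x)*f a) =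
          β*(f (x*(a*z₀)) + f (x*(σ a*z₀)) - 2*(f x*f a))
          - (β*f (x*(a*z₀)) + β*f (x*(σ a*z₀)) - 2*(f (x*z₀)*f a)) := by ring
      have hb1 : ‖β*(f (x*(a*z₀)) + f (x*(σ a*z₀)) - 2*(f x*f a))‖ ≤
          ‖β‖*δ := by
        rw [norm_mul]; exact mul_le_mul_of_nonneg_left h1 (norm_nonneg β)
      have hA : ‖2*((f (x*z₀) - β*f x)*f a)‖ ≤ ‖β‖*δ + (δ+(M+M)) := by
        rw [e]; exact (tsub _ _).trans (add_le_add hb1 h2)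
      rw [norm_mul, norm_mul, Complex.norm_two] at hA
      linarith
  -- generic helpers after getting β
  have bmul : ∀ (b w : ℂ) (d : ℝ), ‖w‖ ≤ d → ‖b*w‖ ≤ ‖b‖*d := by
    intro b w d hw
    rw [norm_mul]; exact mul_le_mul_of_nonneg_left hw (norm_nonneg b)
  have bscal : ∀ (w e : ℂ) (d : ℝ), ‖e‖ ≤ d →
      ‖2*(w*e)‖ ≤ 2*(‖w‖*d) := by
    intro w e d he
    rw [norm_mul, norm_mul, Complex.norm_two]
    exact mul_le_mul_of_nonneg_left
      (mul_le_mul_of_nonneg_left he (norm_nonneg w)) (by norm_num)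
  have hDgen : ∀ β : ℂ, (∀ x, f (x*z₀) = β*f x) →
      ∀ p q, ‖β*f (p*q) + β*f (p*σ q) - 2*f p*f q‖ ≤ δ := by
    intro β hFβ p q
    have h := hf p q
    rw [hFβ (p*q), hFβ (p*σ q)] at h
    exact h
  have concl : ∀ β : ℂ, (∀ x, f (x*z₀) = β*f x) →
      (∀ x y, β*f (x*y) + β*f (x*σ y) - 2*f x*f y = 0) →
      ∀ x y, f (x*y*z₀) + f (x*σ y*z₀) = 2*f x*f y := by
    intro β hFβ h x y
    rw [hFβ (x*y), hFβ (x*σ y)]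
    exact sub_eq_zero.mp (h x y)
  rcases hσ with hm | ha
  · -- σ is a morphism
    have hΨ : ∀ a u y, ‖2*f (a*z₀)*(f (u*y) + f (u*σ y)) - 4*(f a*(f u*f y))‖ ≤
        δ*(8 + 2*‖f u‖ + 2*‖f y‖) := by
      intro a u y
      have h1 := hf (a*u*z₀) y
      have h2 := hf (a*σ u*z₀) y
      have h3 := hf (a*z₀) (u*y)
      have h4 := hf (a*z₀) (u*σ y)
      have h5 := hf a u
      rw [hm u y] at h3
      rw [hm u (σ y), hσσ y] at h4
      simp only [mul_assoc, hz] at h1 h2 h3 h4 h5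
      have e : 2*f (a*z₀)*(f (u*y) + f (u*σ y)) - 4*(f a*(f u*f y)) =
        ((f (a*(u*(y*(z₀*z₀)))) + f (a*(u*(σ y*(z₀*z₀)))) - 2*(f (a*(u*z₀))*f y))
          - (f (a*(u*(y*(z₀*z₀)))) + f (a*(σ u*(σ y*(z₀*z₀)))) - 2*(f (a*z₀)*f (u*y))))
        + ((f (a*(σ u*(y*(z₀*z₀)))) + f (a*(σ u*(σ y*(z₀*z₀)))) - 2*(f (a*(σ u*z₀))*f y))
          - (f (a*(u*(σ y*(z₀*z₀)))) + f (a*(σ u*(y*(z₀*z₀)))) - 2*(f (a*z₀)*f (u*σ y))))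
        + 2*(f y*(f (a*(u*z₀)) + f (a*(σ u*z₀)) - 2*(f a*f u))) := by ring
      have b1 := (tsub _ _).trans (add_le_add h1 h3)
      have b2 := (tsub _ _).trans (add_le_add h2 h4)
      have b3 := bscal (f y) _ δ h5
      have hT := (tadd _ _).trans (add_le_add ((tadd _ _).trans (add_le_add b1 b2)) b3)
      rw [e]
      have n1 : 0 ≤ δ*‖f u‖ := mul_nonneg hδ.le (norm_nonneg _)
      have n2 : 0 ≤ ‖f y‖ := norm_nonneg _
      linarith [hT]
    obtain ⟨β, hFβ⟩ := getβ (fun u y => f (u*y) + f (u*σ y)) 4 (by norm_num) hΨ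
    have hD := hDgen β hFβ
    apply concl β hFβ
    intro x y
    apply kill
    refine ⟨(2*(‖f x‖*δ) + 4*(‖β‖*δ))/2, fun a => ?_⟩
    have h1 := hD y a
    have h2 := hD x (y*a)
    have h3 := hD x (y*σ a)
    have h4 := hD (x*y) a
    have h5 := hD (x*σ y) a
    rw [hm y a] at h2
    rw [hm y (σ a), hσσ a] at h3
    simp only [mul_assoc] at h1 h2 h3 h4 h5
    have e : 2*(f a*(β*f (x*y) + β*f (x*σ y) - 2*f x*f y)) =
      (β*(β*f (x*(y*a)) + β*f (x*(σ y*σ a)) - 2*(f x*f (y*a)))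
        - β*(β*f (x*(y*a)) + β*f (x*(y*σ a)) - 2*(f (x*y)*f a)))
      + (β*(β*f (x*(y*σ a)) + β*f (x*(σ y*a)) - 2*(f x*f (y*σ a)))
        - β*(β*f (x*(σ y*a)) + β*f (x*(σ y*σ a)) - 2*(f (x*σ y)*f a)))
      + 2*(f x*(β*f (y*a) + β*f (y*σ a) - 2*(f y*f a))) := by ring
    have b1 := (tsub _ _).trans (add_le_add (bmul β _ δ h2) (bmul β _ δ h4))
    have b2 := (tsub _ _).trans (add_le_add (bmul β _ δ h3) (bmul β _ δ h5))
    have b3 := bscal (f x) _ δ h1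
    have hA := (tadd _ _).trans (add_le_add ((tadd _ _).trans (add_le_add b1 b2)) b3)
    rw [← e] at hA
    rw [norm_mul, norm_mul, Complex.norm_two] at hA
    linarith
  · -- σ is an antimorphism
    have hΨ : ∀ a u y, ‖2*f (a*z₀)*(f (y*u) + f (y*σ u) + f (σ y*u) + f (σ y*σ u)) - 8*(f a*(f u*f y))‖ ≤
        δ*(8 + 2*‖f u‖ + 2*‖f y‖) := by
      intro a u y
      have h1 := hf (a*y*z₀) u
      have h2 := hf (a*σ y*z₀) u
      have h3 := hf (a*u*z₀) y
      have h4 := hf (a*σ u*z₀) y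
      have h5 := hf a y
      have h6 := hf a u
      have h7 := hf (a*z₀) (y*u)
      have h8 := hf (a*z₀) (y*σ u)
      have h9 := hf (a*z₀) (σ y*u)
      have h10 := hf (a*z₀) (σ y*σ u)
      rw [ha y u] at h7
      rw [ha y (σ u), hσσ u] at h8
      rw [ha (σ y) u, hσσ y] at h9
      rw [ha (σ y) (σ u), hσσ u, hσσ y] at h10
      simp only [mul_assoc, hz] at h1 h2 h3 h4 h5 h6 h7 h8 h9 h10
      have e : 2*f (a*z₀)*(f (y*u) + f (y*σ u) + f (σ y*u) + f (σ y*σ u)) - 8*(f a*(f u*f y)) =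
        (((f (a*(y*(u*(z₀*z₀)))) + f (a*(y*(σ u*(z₀*z₀)))) - 2*(f (a*(y*z₀))*f u))
          - (f (a*(y*(u*(z₀*z₀)))) + f (a*(σ u*(σ y*(z₀*z₀)))) - 2*(f (a*z₀)*f (y*u))))
        + ((f (a*(σ y*(u*(z₀*z₀)))) + f (a*(σ y*(σ u*(z₀*z₀)))) - 2*(f (a*(σ y*z₀))*f u))
          - (f (a*(σ y*(σ u*(z₀*z₀)))) + f (a*(u*(y*(z₀*z₀)))) - 2*(f (a*z₀)*f (σ y*σ u)))))
        + (((f (a*(u*(y*(z₀*z₀)))) + f (a*(u*(σ y*(z₀*z₀)))) - 2*(f (a*(u*z₀))*f y))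
          - (f (a*(y*(σ u*(z₀*z₀)))) + f (a*(u*(σ y*(z₀*z₀)))) - 2*(f (a*z₀)*f (y*σ u))))
        + ((f (a*(σ u*(y*(z₀*z₀)))) + f (a*(σ u*(σ y*(z₀*z₀)))) - 2*(f (a*(σ u*z₀))*f y))
          - (f (a*(σ y*(u*(z₀*z₀)))) + f (a*(σ u*(y*(z₀*z₀)))) - 2*(f (a*z₀)*f (σ y*u)))))
        + (2*(f u*(f (a*(y*z₀)) + f (a*(σ y*z₀)) - 2*(f a*f y)))
          + 2*(f y*(f (a*(u*z₀)) + f (a*(σ u*z₀)) - 2*(f a*f u)))) := by ring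
      have b1 := (tadd _ _).trans (add_le_add
        ((tsub _ _).trans (add_le_add h1 h7)) ((tsub _ _).trans (add_le_add h2 h10)))
      have b2 := (tadd _ _).trans (add_le_add
        ((tsub _ _).trans (add_le_add h3 h8)) ((tsub _ _).trans (add_le_add h4 h9)))
      have b3 := (tadd _ _).trans (add_le_add (bscal (f u) _ δ h5) (bscal (f y) _ δ h6))
      have hT := (tadd _ _).trans (add_le_add ((tadd _ _).trans (add_le_add b1 b2)) b3)
      rw [e]
      have n1 : 0 ≤ ‖f u‖ := norm_nonneg _
      have n2 : 0 ≤ ‖f y‖ := norm_nonneg _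
      linarith [hT]
    obtain ⟨β, hFβ⟩ := getβ
      (fun u y => f (y*u) + f (y*σ u) + f (σ y*u) + f (σ y*σ u)) 8 (by norm_num) hΨ
    have hD := hDgen β hFβ
    have hc : ∀ u v, ‖β*f (u*v) - β*f (v*u)‖ ≤ 2*δ := by
      intro u v
      have huv : f (u*σ v) = f (v*σ u) := by
        have h := fσ (u*σ v)
        rw [ha u (σ v), hσσ v] at h
        exact h.symm
      have h1 := hD u v
      have h2 := hD v u
      rw [huv] at h1
      have e : β*f (u*v) - β*f (v*u) =
        (β*f (u*v) + β*f (v*σ u) - 2*f u*f v) - (β*f (v*u) + β*f (v*σ u) - 2*f v*f u) := by ring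
      rw [e]
      exact (tsub _ _).trans (by linarith [h1, h2])
    apply concl β hFβ
    intro x y
    apply kill
    refine ⟨(8*(‖β‖*δ) + 6*(‖f y‖*δ))/2, fun a => ?_⟩
    have g1 : f (a*(σ y*σ x)) = f (x*(y*σ a)) :=
      (fσ (a*(σ y*σ x))).symm.trans (congrArg f (by simp only [ha, hσσ, mul_assoc]))
    have g2 : f (a*(y*σ x)) = f (x*(σ y*σ a)) :=
      (fσ (a*(y*σ x))).symm.trans (congrArg f (by simp only [ha, hσσ, mul_assoc]))
    have gx : f (σ a*x) = f (σ x*a) :=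
      (fσ (σ a*x)).symm.trans (congrArg f (by simp only [ha, hσσ, mul_assoc]))
    have h1 := hD (a*x) y
    have h3 := hD a (x*y)
    have h4 := hD a (x*σ y)
    have h5 := hD a x
    have h6 := hD (σ a*x) y
    have c1 := hc (x*y) (σ a)
    have c2 := hc (x*σ y) (σ a)
    have c3 := hc a (σ x)
    rw [ha x y] at h3
    rw [ha x (σ y), hσσ y] at h4
    simp only [mul_assoc] at h1 h3 h4 h5 h6 c1 c2 c3
    rw [g1] at h3
    rw [g2] at h4
    rw [gx] at h6
    have e : 2*(f a*(β*f (x*y) + β*f (x*σ y) - 2*f x*f y)) =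
      ((β*(β*f (a*(x*y)) + β*f (a*(x*σ y)) - 2*(f (a*x)*f y))
          - β*(β*f (a*(x*y)) + β*f (x*(y*σ a)) - 2*(f a*f (x*y))))
        + (β*(β*f (σ a*(x*y)) + β*f (σ a*(x*σ y)) - 2*(f (σ x*a)*f y))
          - β*(β*f (a*(x*σ y)) + β*f (x*(σ y*σ a)) - 2*(f a*f (x*σ y)))))
      + (2*(f y*(β*f (a*x) + β*f (a*σ x) - 2*(f a*f x)))
          - 2*(f y*(β*f (a*σ x) - β*f (σ x*a))))
      + (β*(β*f (x*(y*σ a)) - β*f (σ a*(x*y)))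
          + β*(β*f (x*(σ y*σ a)) - β*f (σ a*(x*σ y)))) := by ring
    have b1 := (tadd _ _).trans (add_le_add
      ((tsub _ _).trans (add_le_add (bmul β _ δ h1) (bmul β _ δ h3)))
      ((tsub _ _).trans (add_le_add (bmul β _ δ h6) (bmul β _ δ h4))))
    have b2 := (tsub _ _).trans (add_le_add (bscal (f y) _ δ h5) (bscal (f y) _ (2*δ) c3))
    have b3 := (tadd _ _).trans (add_le_add (bmul β _ (2*δ) c1) (bmul β _ (2*δ) c2))
    have hA := (tadd _ _).trans (add_le_add ((tadd _ _).trans (add_le_add b1 b2)) b3)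
    rw [← e] at hA
    rw [norm_mul, norm_mul, Complex.norm_two] at hA
    linarith
end

section
/- Let δ > 0. If f: S → ℂ satisfies |f(xσ(y)z₀) − f(xyz₀) − 2f(x)f(y)| ≤ δ for all x,y ∈ S, then either f is bounded with |f(x)| ≤ (1 + √(1 + 2δ))/2 for all x ∈ S, or f satisfies f(xσ(y)z₀) − f(xyz₀) = 2f(x)f(y) for all x,y ∈ S. -/
set_option maxHeartbeats 1000000


theorem stmt19 {S : Type*} [Semigroup S] (σ : S → S) (hσ : (∀ x y, σ (x * y) = σ x * σ y) ∨ (∀ x y, σ (x * y) = σ y * σ x))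
    (hσσ : ∀ x, σ (σ x) = x)
    (z₀ : S) (hz : ∀ x, z₀ * x = x * z₀) (δ : ℝ) (hδ : 0 < δ) (f : S → ℂ)
    (hf : ∀ x y, ‖f (x * σ y * z₀) - f (x * y * z₀) - 2 * f x * f y‖ ≤ δ) :
    (∀ x, ‖f x‖ ≤ (1 + Real.sqrt (1 + 2 * δ)) / 2) ∨
      ∀ x y, f (x * σ y * z₀) - f (x * y * z₀) = 2 * f x * f y := by
  by_cases hbdd : ∀ x, ‖f x‖ ≤ (1 + Real.sqrt (1 + 2 * δ)) / 2
  · exact Or.inl hbdd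
  right
  push_neg at hbdd
  obtain ⟨a₀, ha₀⟩ := hbdd
  set B := (1 + Real.sqrt (1 + 2 * δ)) / 2 with hBdef
  have hs0 : (0:ℝ) ≤ 1 + 2 * δ := by linarith
  have hs2 : Real.sqrt (1 + 2 * δ) ^ 2 = 1 + 2 * δ := Real.sq_sqrt hs0
  have hs1 : (1:ℝ) ≤ Real.sqrt (1 + 2 * δ) := by
    have h := Real.sqrt_le_sqrt (show (1:ℝ) ≤ 1 + 2 * δ by linarith)
    rwa [Real.sqrt_one] at h
  have hB1 : (1:ℝ) ≤ B := by rw [hBdef]; linarith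
  have hBsq : B ^ 2 = B + δ / 2 := by rw [hBdef]; linear_combination hs2 / 4
  -- triangle inequality helpers
  have hadd : ∀ (u v : ℂ) (ru rv : ℝ), ‖u‖ ≤ ru → ‖v‖ ≤ rv →
      ‖u + v‖ ≤ ru + rv := fun u v ru rv hu hv =>
    le_trans (norm_add_le u v) (add_le_add hu hv)
  have hsub : ∀ (u v : ℂ) (ru rv : ℝ), ‖u‖ ≤ ru → ‖v‖ ≤ rv →
      ‖u - v‖ ≤ ru + rv := by
    intro u v ru rv hu hv
    rw [sub_eq_add_neg]
    refine hadd _ _ _ _ hu ?_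
    rwa [norm_neg]
  -- step: from a point with large |f|, get a much larger value at a point of the form b*c*z₀
  have step : ∀ a : S, ∃ b c : S, ‖f a‖ ^ 2 - δ / 2 ≤ ‖f (b * c * z₀)‖ := by
    intro a
    have h := hf a a
    have tri : 2 * ‖f a‖ ^ 2 ≤
        ‖f (a * σ a * z₀)‖ + ‖f (a * a * z₀)‖ + δ := by
      have e2 : ‖2 * f a * f a‖ = 2 * ‖f a‖ ^ 2 := by
        rw [norm_mul, norm_mul, Complex.norm_two]; ring
      calc 2 * ‖f a‖ ^ 2 = ‖2 * f a * f a‖ := e2.symm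
        _ = ‖f (a * σ a * z₀) - f (a * a * z₀) -
              (f (a * σ a * z₀) - f (a * a * z₀) - 2 * f a * f a)‖ := by ring_nf
        _ ≤ ‖f (a * σ a * z₀)‖ + ‖f (a * a * z₀)‖ + δ :=
            hsub _ _ _ _ (hsub _ _ _ _ le_rfl le_rfl) h
    rcases le_or_gt (‖f a‖ ^ 2 - δ / 2) (‖f (a * σ a * z₀)‖) with hc | hc
    · exact ⟨a, σ a, hc⟩
    · exact ⟨a, a, by linarith⟩
  -- growth
  have grow : ∀ n : ℕ, ∃ a : S, B + 2 ^ n * (‖f a₀‖ - B) ≤ ‖f a‖ := by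
    intro n
    induction n with
    | zero => exact ⟨a₀, by rw [pow_zero]; linarith⟩
    | succ n ih =>
      obtain ⟨a, ha⟩ := ih
      obtain ⟨b, c, hbc⟩ := step a
      refine ⟨b * c * z₀, ?_⟩
      set s := (2:ℝ) ^ n * (‖f a₀‖ - B) with hsdef
      have hspos : 0 < s := by
        rw [hsdef]
        have : (0:ℝ) < 2 ^ n := by positivity
        nlinarith
      have hgoal : B + 2 ^ (n + 1) * (‖f a₀‖ - B) = B + 2 * s := by
        rw [hsdef]; ring
      rw [hgoal]
      refine le_trans ?_ hbc
      nlinarith [ha, hB1, hBsq, sq_nonneg (‖f a‖ - B - s), sq_nonneg s,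
        mul_nonneg (show (0:ℝ) ≤ ‖f a‖ - (B + s) by linarith)
          (show (0:ℝ) ≤ B + s by linarith),
        mul_nonneg (show (0:ℝ) ≤ s by linarith) (show (0:ℝ) ≤ B - 1 by linarith)]
  -- unboundedness
  have U₀ : ∀ M : ℝ, ∃ a : S, M ≤ ‖f a‖ := by
    intro M
    have hε : 0 < ‖f a₀‖ - B := by linarith
    obtain ⟨n, hn⟩ := exists_nat_ge ((M - B) / (‖f a₀‖ - B))
    obtain ⟨a, ha⟩ := grow n
    refine ⟨a, le_trans ?_ ha⟩
    have h3 : (n:ℝ) ≤ 2 ^ n := by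
      calc (n:ℝ) ≤ ((2 ^ n : ℕ) : ℝ) := by exact_mod_cast (Nat.lt_two_pow_self (n := n)).le
        _ = 2 ^ n := by push_cast; ring
    have h2 : (M - B) / (‖f a₀‖ - B) ≤ 2 ^ n := le_trans hn h3
    rw [div_le_iff₀ hε] at h2
    have hB0 : (0:ℝ) ≤ B := by linarith
    linarith
  have U : ∀ M : ℝ, ∃ b c : S, M ≤ ‖f (b * c * z₀)‖ := by
    intro M
    obtain ⟨a, ha⟩ := U₀ (Real.sqrt (|M| + δ / 2))
    obtain ⟨b, c, hbc⟩ := step a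
    refine ⟨b, c, ?_⟩
    have h1 : |M| + δ / 2 ≤ ‖f a‖ ^ 2 := by
      have h2 := Real.sq_sqrt (show (0:ℝ) ≤ |M| + δ / 2 by positivity)
      calc |M| + δ / 2 = Real.sqrt (|M| + δ / 2) ^ 2 := h2.symm
        _ ≤ ‖f a‖ ^ 2 := pow_le_pow_left₀ (Real.sqrt_nonneg _) ha 2
    have := le_abs_self M
    linarith
  -- vanishing lemmas
  have hzeroU₀ : ∀ c : ℂ, (∃ K : ℝ, ∀ a : S, ‖c‖ * ‖f a‖ ≤ K) → c = 0 := by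
    rintro c ⟨K, hK⟩
    by_contra hc
    have hc' : 0 < ‖c‖ := norm_pos_iff.mpr hc
    obtain ⟨a, ha⟩ := U₀ ((K + 1) / ‖c‖)
    have h1 : K + 1 ≤ ‖c‖ * ‖f a‖ := by
      have he : ‖c‖ * ((K + 1) / ‖c‖) = K + 1 := by field_simp
      rw [← he]
      exact mul_le_mul_of_nonneg_left ha (le_of_lt hc')
    linarith [hK a]
  have hzeroU : ∀ c : ℂ,
      (∃ K : ℝ, ∀ b c' : S, ‖c‖ * ‖f (b * c' * z₀)‖ ≤ K) → c = 0 := by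
    rintro c ⟨K, hK⟩
    by_contra hc
    have hc' : 0 < ‖c‖ := norm_pos_iff.mpr hc
    obtain ⟨b, c', ha⟩ := U ((K + 1) / ‖c‖)
    have h1 : K + 1 ≤ ‖c‖ * ‖f (b * c' * z₀)‖ := by
      have he : ‖c‖ * ((K + 1) / ‖c‖) = K + 1 := by field_simp
      rw [← he]
      exact mul_le_mul_of_nonneg_left ha (le_of_lt hc')
    linarith [hK b c']
  have hzz : ∀ u v : S, u * z₀ * v = u * v * z₀ := fun u v => by
    rw [mul_assoc, hz v, ← mul_assoc]
  rcases hσ with hσm | hσa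
  · -- σ is a morphism
    have star : ∀ a x y : S,
        ‖2 * f a * (f (x * σ y * z₀) - f (x * y * z₀) - 2 * f x * f y) -
          2 * f (x * σ y) * (f (a * z₀) - f (σ a * z₀))‖ ≤ (6 + 2 * ‖f x‖) * δ := by
      intro a x y
      have h1 := hf (x * σ y * z₀) a
      have h2 := hf (x * y * z₀) a
      have h3 := hf y a
      have h4 := hf x (y * σ a * z₀)
      have h5 := hf x (y * a * z₀)
      have h6 := hf (x * σ y) (σ a * z₀)
      have h7 := hf (x * σ y) (a * z₀)
      rw [hzz (x * σ y) (σ a), hzz (x * σ y) a] at h1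
      rw [hzz (x * y) (σ a), hzz (x * y) a] at h2
      rw [hσm (y * σ a) z₀, hσm y (σ a), hσσ a] at h4
      simp only [← mul_assoc] at h4
      rw [hσm (y * a) z₀, hσm y a] at h5
      simp only [← mul_assoc] at h5
      rw [hσm (σ a) z₀, hσσ a] at h6
      simp only [← mul_assoc] at h6
      rw [hσm a z₀] at h7
      simp only [← mul_assoc] at h7
      have m3 : ‖2 * f x * (f (y * σ a * z₀) - f (y * a * z₀) - 2 * f y * f a)‖ ≤
          2 * ‖f x‖ * δ := by
        rw [norm_mul, norm_mul, Complex.norm_two]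
        exact mul_le_mul_of_nonneg_left h3 (by positivity)
      rw [show 2 * f a * (f (x * σ y * z₀) - f (x * y * z₀) - 2 * f x * f y) -
            2 * f (x * σ y) * (f (a * z₀) - f (σ a * z₀)) =
          (f (x * y * σ a * z₀ * z₀) - f (x * y * a * z₀ * z₀) - 2 * f (x * y * z₀) * f a) -
            (f (x * σ y * σ a * z₀ * z₀) - f (x * σ y * a * z₀ * z₀) - 2 * f (x * σ y * z₀) * f a) +
            2 * f x * (f (y * σ a * z₀) - f (y * a * z₀) - 2 * f y * f a) +
            (f (x * σ y * a * σ z₀ * z₀) - f (x * y * σ a * z₀ * z₀) - 2 * f x * f (y * σ a * z₀)) -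
            (f (x * σ y * σ a * σ z₀ * z₀) - f (x * y * a * z₀ * z₀) - 2 * f x * f (y * a * z₀)) -
            (f (x * σ y * a * σ z₀ * z₀) - f (x * σ y * σ a * z₀ * z₀) -
              2 * f (x * σ y) * f (σ a * z₀)) +
            (f (x * σ y * σ a * σ z₀ * z₀) - f (x * σ y * a * z₀ * z₀) -
              2 * f (x * σ y) * f (a * z₀)) from by ring]
      refine le_trans (hadd _ _ _ _ (hsub _ _ _ _ (hsub _ _ _ _ (hadd _ _ _ _
        (hadd _ _ _ _ (hsub _ _ _ _ h2 h1) m3) h4) h5) h6) h7) (le_of_eq (by ring))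
    have H1 : ∀ x y x' y' : S,
        (f (x * σ y * z₀) - f (x * y * z₀) - 2 * f x * f y) * f (x' * σ y') =
          (f (x' * σ y' * z₀) - f (x' * y' * z₀) - 2 * f x' * f y') * f (x * σ y) := by
      intro x y x' y'
      rw [← sub_eq_zero]
      refine hzeroU₀ _ ⟨(6 + 2 * ‖f x‖) * δ * ‖f (x' * σ y')‖ +
        (6 + 2 * ‖f x'‖) * δ * ‖f (x * σ y)‖, ?_⟩
      intro a
      have g1 := star a x y
      have g2 := star a x' y'
      have key : (2 : ℂ) * f a *
          ((f (x * σ y * z₀) - f (x * y * z₀) - 2 * f x * f y) * f (x' * σ y') -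
            (f (x' * σ y' * z₀) - f (x' * y' * z₀) - 2 * f x' * f y') * f (x * σ y)) =
          (2 * f a * (f (x * σ y * z₀) - f (x * y * z₀) - 2 * f x * f y) -
            2 * f (x * σ y) * (f (a * z₀) - f (σ a * z₀))) * f (x' * σ y') -
          (2 * f a * (f (x' * σ y' * z₀) - f (x' * y' * z₀) - 2 * f x' * f y') -
            2 * f (x' * σ y') * (f (a * z₀) - f (σ a * z₀))) * f (x * σ y) := by ring
      have hb1 : ‖(2 * f a * (f (x * σ y * z₀) - f (x * y * z₀) - 2 * f x * f y) -
            2 * f (x * σ y) * (f (a * z₀) - f (σ a * z₀))) * f (x' * σ y')‖ ≤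
          (6 + 2 * ‖f x‖) * δ * ‖f (x' * σ y')‖ := by
        rw [norm_mul]
        exact mul_le_mul_of_nonneg_right g1 (norm_nonneg _)
      have hb2 : ‖(2 * f a * (f (x' * σ y' * z₀) - f (x' * y' * z₀) - 2 * f x' * f y') -
            2 * f (x' * σ y') * (f (a * z₀) - f (σ a * z₀))) * f (x * σ y)‖ ≤
          (6 + 2 * ‖f x'‖) * δ * ‖f (x * σ y)‖ := by
        rw [norm_mul]
        exact mul_le_mul_of_nonneg_right g2 (norm_nonneg _)
      have h2 : ‖(2 : ℂ) * f a *
          ((f (x * σ y * z₀) - f (x * y * z₀) - 2 * f x * f y) * f (x' * σ y') -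
            (f (x' * σ y' * z₀) - f (x' * y' * z₀) - 2 * f x' * f y') * f (x * σ y))‖ ≤
          (6 + 2 * ‖f x‖) * δ * ‖f (x' * σ y')‖ +
            (6 + 2 * ‖f x'‖) * δ * ‖f (x * σ y)‖ := by
        rw [key]
        exact hsub _ _ _ _ hb1 hb2
      have h3 : ‖(2 : ℂ) * f a *
          ((f (x * σ y * z₀) - f (x * y * z₀) - 2 * f x * f y) * f (x' * σ y') -
            (f (x' * σ y' * z₀) - f (x' * y' * z₀) - 2 * f x' * f y') * f (x * σ y))‖ =
          2 * (‖(f (x * σ y * z₀) - f (x * y * z₀) - 2 * f x * f y) * f (x' * σ y') -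
            (f (x' * σ y' * z₀) - f (x' * y' * z₀) - 2 * f x' * f y') * f (x * σ y)‖ *
            ‖f a‖) := by
        rw [norm_mul, norm_mul, Complex.norm_two]; ring
      have hnn : 0 ≤ ‖(f (x * σ y * z₀) - f (x * y * z₀) - 2 * f x * f y) *
            f (x' * σ y') -
          (f (x' * σ y' * z₀) - f (x' * y' * z₀) - 2 * f x' * f y') * f (x * σ y)‖ *
          ‖f a‖ :=
        mul_nonneg (norm_nonneg _) (norm_nonneg _)
      linarith [h2, h3.symm.le, h3.le]
    intro x y
    rw [← sub_eq_zero]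
    refine hzeroU _ ⟨δ * ‖f (x * σ y)‖, ?_⟩
    intro b c'
    have h := H1 x y b (σ (c' * z₀))
    rw [hσσ] at h
    simp only [← mul_assoc] at h
    have hb := hf b (σ (c' * z₀))
    rw [hσσ] at hb
    simp only [← mul_assoc] at hb
    rw [← norm_mul, h, norm_mul]
    exact mul_le_mul_of_nonneg_right hb (norm_nonneg _)
  · -- σ is an antimorphism
    have star : ∀ a x y : S,
        ‖2 * f a * (f (x * σ y * z₀) - f (x * y * z₀) - 2 * f x * f y) -
          2 * f (x * z₀) * (f (a * y) - f (y * a) + f (σ y * a) + f (y * σ a))‖ ≤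
        (8 + 2 * ‖f y‖) * δ := by
      intro a x y
      have h1 := hf (x * σ y * z₀) a
      have h2 := hf (x * y * z₀) a
      have h3 := hf x a
      have h4 := hf (x * σ a * z₀) y
      have h5 := hf (x * a * z₀) y
      have h6 := hf (x * z₀) (a * y)
      have h7 := hf (x * z₀) (y * a)
      have h8 := hf (x * z₀) (σ y * a)
      have h9 := hf (x * z₀) (y * σ a)
      rw [hzz (x * σ y) (σ a), hzz (x * σ y) a] at h1
      rw [hzz (x * y) (σ a), hzz (x * y) a] at h2
      rw [hzz (x * σ a) (σ y), hzz (x * σ a) y] at h4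
      rw [hzz (x * a) (σ y), hzz (x * a) y] at h5
      rw [hσa a y, hzz x (σ y * σ a), hzz x (a * y)] at h6
      simp only [← mul_assoc] at h6
      rw [hσa y a, hzz x (σ a * σ y), hzz x (y * a)] at h7
      simp only [← mul_assoc] at h7
      rw [hσa (σ y) a, hσσ y, hzz x (σ a * y), hzz x (σ y * a)] at h8
      simp only [← mul_assoc] at h8
      rw [hσa y (σ a), hσσ a, hzz x (a * σ y), hzz x (y * σ a)] at h9
      simp only [← mul_assoc] at h9
      have m3 : ‖2 * f y * (f (x * σ a * z₀) - f (x * a * z₀) - 2 * f x * f a)‖ ≤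
          2 * ‖f y‖ * δ := by
        rw [norm_mul, norm_mul, Complex.norm_two]
        exact mul_le_mul_of_nonneg_left h3 (by positivity)
      rw [show 2 * f a * (f (x * σ y * z₀) - f (x * y * z₀) - 2 * f x * f y) -
            2 * f (x * z₀) * (f (a * y) - f (y * a) + f (σ y * a) + f (y * σ a)) =
          (f (x * y * σ a * z₀ * z₀) - f (x * y * a * z₀ * z₀) - 2 * f (x * y * z₀) * f a) -
            (f (x * σ y * σ a * z₀ * z₀) - f (x * σ y * a * z₀ * z₀) - 2 * f (x * σ y * z₀) * f a) +
            2 * f y * (f (x * σ a * z₀) - f (x * a * z₀) - 2 * f x * f a) +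
            (f (x * σ a * σ y * z₀ * z₀) - f (x * σ a * y * z₀ * z₀) -
              2 * f (x * σ a * z₀) * f y) -
            (f (x * a * σ y * z₀ * z₀) - f (x * a * y * z₀ * z₀) - 2 * f (x * a * z₀) * f y) +
            (f (x * σ y * σ a * z₀ * z₀) - f (x * a * y * z₀ * z₀) - 2 * f (x * z₀) * f (a * y)) -
            (f (x * σ a * σ y * z₀ * z₀) - f (x * y * a * z₀ * z₀) - 2 * f (x * z₀) * f (y * a)) +
            (f (x * σ a * y * z₀ * z₀) - f (x * σ y * a * z₀ * z₀) - 2 * f (x * z₀) * f (σ y * a)) +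
            (f (x * a * σ y * z₀ * z₀) - f (x * y * σ a * z₀ * z₀) - 2 * f (x * z₀) * f (y * σ a))
          from by ring]
      refine le_trans (hadd _ _ _ _ (hadd _ _ _ _ (hsub _ _ _ _ (hadd _ _ _ _ (hsub _ _ _ _
        (hadd _ _ _ _ (hadd _ _ _ _ (hsub _ _ _ _ h2 h1) m3) h4) h5) h6) h7) h8) h9)
        (le_of_eq (by ring))
    have H1 : ∀ x y x' : S,
        (f (x * σ y * z₀) - f (x * y * z₀) - 2 * f x * f y) * f (x' * z₀) =
          (f (x' * σ y * z₀) - f (x' * y * z₀) - 2 * f x' * f y) * f (x * z₀) := by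
      intro x y x'
      rw [← sub_eq_zero]
      refine hzeroU₀ _ ⟨(8 + 2 * ‖f y‖) * δ * ‖f (x' * z₀)‖ +
        (8 + 2 * ‖f y‖) * δ * ‖f (x * z₀)‖, ?_⟩
      intro a
      have g1 := star a x y
      have g2 := star a x' y
      have key : (2 : ℂ) * f a *
          ((f (x * σ y * z₀) - f (x * y * z₀) - 2 * f x * f y) * f (x' * z₀) -
            (f (x' * σ y * z₀) - f (x' * y * z₀) - 2 * f x' * f y) * f (x * z₀)) =
          (2 * f a * (f (x * σ y * z₀) - f (x * y * z₀) - 2 * f x * f y) -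
            2 * f (x * z₀) * (f (a * y) - f (y * a) + f (σ y * a) + f (y * σ a))) * f (x' * z₀) -
          (2 * f a * (f (x' * σ y * z₀) - f (x' * y * z₀) - 2 * f x' * f y) -
            2 * f (x' * z₀) * (f (a * y) - f (y * a) + f (σ y * a) + f (y * σ a))) * f (x * z₀) := by
        ring
      have hb1 : ‖(2 * f a * (f (x * σ y * z₀) - f (x * y * z₀) - 2 * f x * f y) -
            2 * f (x * z₀) * (f (a * y) - f (y * a) + f (σ y * a) + f (y * σ a))) * f (x' * z₀)‖ ≤
          (8 + 2 * ‖f y‖) * δ * ‖f (x' * z₀)‖ := by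
        rw [norm_mul]
        exact mul_le_mul_of_nonneg_right g1 (norm_nonneg _)
      have hb2 : ‖(2 * f a * (f (x' * σ y * z₀) - f (x' * y * z₀) - 2 * f x' * f y) -
            2 * f (x' * z₀) * (f (a * y) - f (y * a) + f (σ y * a) + f (y * σ a))) * f (x * z₀)‖ ≤
          (8 + 2 * ‖f y‖) * δ * ‖f (x * z₀)‖ := by
        rw [norm_mul]
        exact mul_le_mul_of_nonneg_right g2 (norm_nonneg _)
      have h2 : ‖(2 : ℂ) * f a *
          ((f (x * σ y * z₀) - f (x * y * z₀) - 2 * f x * f y) * f (x' * z₀) -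
            (f (x' * σ y * z₀) - f (x' * y * z₀) - 2 * f x' * f y) * f (x * z₀))‖ ≤
          (8 + 2 * ‖f y‖) * δ * ‖f (x' * z₀)‖ +
            (8 + 2 * ‖f y‖) * δ * ‖f (x * z₀)‖ := by
        rw [key]
        exact hsub _ _ _ _ hb1 hb2
      have h3 : ‖(2 : ℂ) * f a *
          ((f (x * σ y * z₀) - f (x * y * z₀) - 2 * f x * f y) * f (x' * z₀) -
            (f (x' * σ y * z₀) - f (x' * y * z₀) - 2 * f x' * f y) * f (x * z₀))‖ =
          2 * (‖(f (x * σ y * z₀) - f (x * y * z₀) - 2 * f x * f y) * f (x' * z₀) -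
            (f (x' * σ y * z₀) - f (x' * y * z₀) - 2 * f x' * f y) * f (x * z₀)‖ *
            ‖f a‖) := by
        rw [norm_mul, norm_mul, Complex.norm_two]; ring
      have hnn : 0 ≤ ‖(f (x * σ y * z₀) - f (x * y * z₀) - 2 * f x * f y) *
            f (x' * z₀) -
          (f (x' * σ y * z₀) - f (x' * y * z₀) - 2 * f x' * f y) * f (x * z₀)‖ *
          ‖f a‖ :=
        mul_nonneg (norm_nonneg _) (norm_nonneg _)
      linarith [h2, h3.le, h3.symm.le]
    intro x y
    rw [← sub_eq_zero]
    refine hzeroU _ ⟨δ * ‖f (x * z₀)‖, ?_⟩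
    intro b c'
    have h := H1 x y (b * c')
    have hb := hf (b * c') y
    rw [← norm_mul, h, norm_mul]
    exact mul_le_mul_of_nonneg_right hb (norm_nonneg _)
end
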